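/- arXiv:1809.05745 — 5 statements merged into one kernel-verified Lean document; each statement's English description precedes it below -/
import Mathlib

section
/- Let a_1, ..., a_m be positive integers with a_1 + ... + a_m = 2B and let x > B. Consider the instance with m+2 flow-shop jobs of processing times x, x, a_1, ..., a_m and one open-shop job of processing time B + 2x. If there exists a subset S_1 ⊆ {1, ..., m} with Σ_{i∈S_1} a_i = B, then this instance admits a feasible schedule with makespan exactly 3B + 6x = 3·(B+2x). -/
open Finset

noncomputable section

/-- Processing time of a job: `p` on flow-shop jobs, `q` otherwise. -/
def jobTime {J : Type*} [DecidableEq J] (F : Finset J) (p q : J → ℝ) (j : J) : ℝ :=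
  if j ∈ F then p j else q j

/-- Feasibility of a schedule given by start times `S j i` of job `j` on machine `i`
(machines `M1, M2, M3` are machines `0, 1, 2`):
all start times are nonnegative, on each machine the open processing intervals of
distinct jobs are pairwise disjoint, for each job the open processing intervals on the
three machines are pairwise disjoint, and each flow-shop job goes through
`M1`, `M2`, `M3` in this order. -/
def Feasible {J : Type*} [DecidableEq J] (F O : Finset J) (p q : J → ℝ)
    (S : J → Fin 3 → ℝ) : Prop :=
  (∀ j ∈ F ∪ O, ∀ i : Fin 3, 0 ≤ S j i) ∧
  (∀ i : Fin 3, ∀ j ∈ F ∪ O, ∀ k ∈ F ∪ O, j ≠ k →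
    S j i + jobTime F p q j ≤ S k i ∨ S k i + jobTime F p q k ≤ S j i) ∧
  (∀ j ∈ F ∪ O, ∀ i i' : Fin 3, i ≠ i' →
    S j i + jobTime F p q j ≤ S j i' ∨ S j i' + jobTime F p q j ≤ S j i) ∧
  (∀ j ∈ F, S j 0 + p j ≤ S j 1 ∧ S j 1 + p j ≤ S j 2)

/-- Makespan: supremum of all completion times of the jobs of `F ∪ O`. -/
def makespan {J : Type*} [DecidableEq J] (F O : Finset J) (p q : J → ℝ)
    (S : J → Fin 3 → ℝ) : ℝ :=
  sSup {x : ℝ | ∃ j ∈ F ∪ O, ∃ i : Fin 3, x = S j i + jobTime F p q j}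

/-- The Partition-reduction instance: `m + 2` flow-shop jobs of processing times
`x, x, a 1, …, a m` and one open-shop job (the `Sum.inr` job) of processing time
`B + 2x`. -/
def redF (m : ℕ) : Finset ((Fin 2 ⊕ Fin m) ⊕ Unit) := Finset.univ.image Sum.inl

def redO (m : ℕ) : Finset ((Fin 2 ⊕ Fin m) ⊕ Unit) := {Sum.inr ()}

def redp (m : ℕ) (a : Fin m → ℕ) (x : ℝ) : ((Fin 2 ⊕ Fin m) ⊕ Unit) → ℝ :=
  Sum.elim (Sum.elim (fun _ => x) (fun i => (a i : ℝ))) (fun _ => 1)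

def redq (m B : ℕ) (x : ℝ) : ((Fin 2 ⊕ Fin m) ⊕ Unit) → ℝ :=
  fun _ => (B : ℝ) + 2 * x

/-! ### Auxiliary definitions for the constructed schedule -/

/-- Prefix sum of processing times of jobs of `T` preceding `i`. -/
def pre {m : ℕ} (a : Fin m → ℕ) (T : Finset (Fin m)) (i : Fin m) : ℝ :=
  ∑ j ∈ T.filter (fun j => j < i), (a j : ℝ)

lemma pre_nonneg {m : ℕ} (a : Fin m → ℕ) (T : Finset (Fin m)) (i : Fin m) :
    0 ≤ pre a T i :=
  Finset.sum_nonneg fun _ _ => Nat.cast_nonneg _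

lemma pre_add_le {m : ℕ} (a : Fin m → ℕ) (T : Finset (Fin m)) {i : Fin m} (hi : i ∈ T) :
    pre a T i + a i ≤ ∑ j ∈ T, (a j : ℝ) := by
  have hnotmem : i ∉ T.filter (fun j => j < i) := by simp
  have hsub : insert i (T.filter (fun j => j < i)) ⊆ T := by
    intro j hj
    rcases Finset.mem_insert.1 hj with h | h
    · exact h ▸ hi
    · exact (Finset.mem_filter.1 h).1
  calc pre a T i + a i = ∑ j ∈ insert i (T.filter (fun j => j < i)), (a j : ℝ) := by
        rw [Finset.sum_insert hnotmem, pre]; ring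
    _ ≤ _ := Finset.sum_le_sum_of_subset_of_nonneg hsub fun _ _ _ => Nat.cast_nonneg _

lemma pre_lt {m : ℕ} (a : Fin m → ℕ) (T : Finset (Fin m)) {i j : Fin m}
    (hi : i ∈ T) (hij : i < j) : pre a T i + a i ≤ pre a T j := by
  have hnotmem : i ∉ T.filter (fun k => k < i) := by simp
  have hsub : insert i (T.filter (fun k => k < i)) ⊆ T.filter (fun k => k < j) := by
    intro k hk
    rcases Finset.mem_insert.1 hk with h | h
    · subst h; exact Finset.mem_filter.2 ⟨hi, hij⟩
    · rcases Finset.mem_filter.1 h with ⟨h1, h2⟩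
      exact Finset.mem_filter.2 ⟨h1, h2.trans hij⟩
  calc pre a T i + a i = ∑ k ∈ insert i (T.filter (fun k => k < i)), (a k : ℝ) := by
        rw [Finset.sum_insert hnotmem, pre]; ring
    _ ≤ _ := Finset.sum_le_sum_of_subset_of_nonneg hsub fun _ _ _ => Nat.cast_nonneg _

/-- The constructed schedule. -/
def sched (m B : ℕ) (a : Fin m → ℕ) (x : ℝ) (S1 : Finset (Fin m)) :
    ((Fin 2 ⊕ Fin m) ⊕ Unit) → Fin 3 → ℝ := fun j i =>
  match j with
  | Sum.inr _ => if i = 0 then 2*B+4*x else if i = 1 then (B:ℝ)+2*x else 0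
  | Sum.inl (Sum.inl k) =>
      if k = 0 then (if i = 0 then 0 else if i = 1 then x else (B:ℝ)+2*x)
      else (if i = 0 then (B:ℝ)+x else if i = 1 then 2*B+4*x else 2*B+5*x)
  | Sum.inl (Sum.inr r) =>
      if r ∈ S1 then
        (if i = 0 then x else if i = 1 then 2*x else (B:ℝ)+3*x) + pre a S1 r
      else
        (if i = 0 then (B:ℝ)+2*x else if i = 1 then 2*B+5*x else 2*B+6*x) + pre a S1ᶜ r

set_option maxHeartbeats 3200000 in
/-- Forward direction of the reduction from Partition: if some subset of the `a i` sums
to `B`, then the reduction instance has a feasible schedule of makespan exactly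
`3B + 6x = 3(B + 2x)`. -/
theorem stmt12 (m B : ℕ) (a : Fin m → ℕ) (ha : ∀ i, 0 < a i)
    (hsum : ∑ i, a i = 2 * B) (x : ℝ) (hx : (B : ℝ) < x)
    (S1 : Finset (Fin m)) (hS1 : ∑ i ∈ S1, a i = B) :
    ∃ S : ((Fin 2 ⊕ Fin m) ⊕ Unit) → Fin 3 → ℝ,
      Feasible (redF m) (redO m) (redp m a x) (redq m B x) S ∧
      makespan (redF m) (redO m) (redp m a x) (redq m B x) S
        = 3 * (B : ℝ) + 6 * x ∧
      3 * (B : ℝ) + 6 * x = 3 * ((B : ℝ) + 2 * x) := by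
  classical
  have hB0 : (0:ℝ) ≤ B := Nat.cast_nonneg _
  have hx0 : (0:ℝ) < x := lt_of_le_of_lt hB0 hx
  -- sums over S1 and its complement
  have hS1R : ∑ i ∈ S1, (a i : ℝ) = B := by exact_mod_cast hS1
  have hS1c : ∑ i ∈ S1ᶜ, a i = B := by
    have := Finset.sum_add_sum_compl S1 a
    omega
  have hS1cR : ∑ i ∈ S1ᶜ, (a i : ℝ) = B := by exact_mod_cast hS1c
  -- prefix-sum bounds
  have key1 : ∀ r ∈ S1, 0 ≤ pre a S1 r ∧ pre a S1 r + a r ≤ (B:ℝ) := by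
    intro r hr
    refine ⟨pre_nonneg a S1 r, ?_⟩
    have := pre_add_le a S1 hr
    rw [hS1R] at this; exact this
  have key2 : ∀ r ∉ S1, 0 ≤ pre a S1ᶜ r ∧ pre a S1ᶜ r + a r ≤ (B:ℝ) := by
    intro r hr
    refine ⟨pre_nonneg a S1ᶜ r, ?_⟩
    have := pre_add_le a S1ᶜ (Finset.mem_compl.2 hr)
    rw [hS1cR] at this; exact this
  have ord : ∀ (T : Finset (Fin m)), ∀ r ∈ T, ∀ s ∈ T, r ≠ s →
      pre a T r + a r ≤ pre a T s ∨ pre a T s + a s ≤ pre a T r := by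
    intro T r hr s hs hne
    rcases lt_or_gt_of_ne hne with h | h
    · exact Or.inl (pre_lt a T hr h)
    · exact Or.inr (pre_lt a T hs h)
  -- job times
  have jtX : ∀ k : Fin 2, jobTime (redF m) (redp m a x) (redq m B x)
      (Sum.inl (Sum.inl k)) = x := by
    intro k
    rw [jobTime, if_pos (by simp [redF])]
    simp [redp]
  have jtA : ∀ r : Fin m, jobTime (redF m) (redp m a x) (redq m B x)
      (Sum.inl (Sum.inr r)) = (a r : ℝ) := by
    intro r
    rw [jobTime, if_pos (by simp [redF])]
    simp [redp]
  have jtO : ∀ u : Unit, jobTime (redF m) (redp m a x) (redq m B x)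
      (Sum.inr u) = (B:ℝ) + 2*x := by
    intro u
    rw [jobTime, if_neg (by simp [redF])]
    simp [redq]
  have memall : ∀ j : (Fin 2 ⊕ Fin m) ⊕ Unit, j ∈ redF m ∪ redO m := by
    intro j
    rcases j with (k | r) | u <;> simp [redF, redO]
  -- the key machine-disjointness statement
  have disj : ∀ (i : Fin 3) (j k : (Fin 2 ⊕ Fin m) ⊕ Unit), j ≠ k →
      sched m B a x S1 j i + jobTime (redF m) (redp m a x) (redq m B x) j ≤ sched m B a x S1 k i ∨
      sched m B a x S1 k i + jobTime (redF m) (redp m a x) (redq m B x) k ≤ sched m B a x S1 j i := by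
    rintro i ((k | r) | u) ((k' | r') | u') hne
    · -- X vs X
      fin_cases k <;> fin_cases k' <;>
        first
        | exact absurd rfl hne
        | (fin_cases i <;>
            simp [sched, jtX, reduceIte] <;>
            first | (left; linarith) | (right; linarith))
    · -- X vs A
      by_cases hr : r' ∈ S1
      · obtain ⟨h1, h2⟩ := key1 r' hr
        fin_cases k <;> fin_cases i <;>
          simp [sched, jtX, jtA, if_pos hr, reduceIte] <;>
          first | (left; linarith) | (right; linarith)
      · obtain ⟨h1, h2⟩ := key2 r' hr
        fin_cases k <;> fin_cases i <;>
          simp [sched, jtX, jtA, if_neg hr, reduceIte] <;>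
          first | (left; linarith) | (right; linarith)
    · -- X vs open
      fin_cases k <;> fin_cases i <;>
        simp [sched, jtX, jtO, reduceIte] <;>
        first | (left; linarith) | (right; linarith)
    · -- A vs X
      by_cases hr : r ∈ S1
      · obtain ⟨h1, h2⟩ := key1 r hr
        fin_cases k' <;> fin_cases i <;>
          simp [sched, jtX, jtA, if_pos hr, reduceIte] <;>
          first | (left; linarith) | (right; linarith)
      · obtain ⟨h1, h2⟩ := key2 r hr
        fin_cases k' <;> fin_cases i <;>
          simp [sched, jtX, jtA, if_neg hr, reduceIte] <;>
          first | (left; linarith) | (right; linarith)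
    · -- A vs A
      have hrr : r ≠ r' := fun h => hne (by rw [h])
      by_cases hr : r ∈ S1 <;> by_cases hr' : r' ∈ S1
      · have hord := ord S1 r hr r' hr' hrr
        fin_cases i <;>
          simp [sched, jtA, if_pos hr, if_pos hr', reduceIte] <;>
          rcases hord with h | h <;>
          first | (left; linarith) | (right; linarith)
      · obtain ⟨h1, h2⟩ := key1 r hr
        obtain ⟨h1', h2'⟩ := key2 r' hr'
        fin_cases i <;>
          simp [sched, jtA, if_pos hr, if_neg hr', reduceIte] <;>
          first | (left; linarith) | (right; linarith)
      · obtain ⟨h1, h2⟩ := key2 r hr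
        obtain ⟨h1', h2'⟩ := key1 r' hr'
        fin_cases i <;>
          simp [sched, jtA, if_neg hr, if_pos hr', reduceIte] <;>
          first | (left; linarith) | (right; linarith)
      · have hord := ord S1ᶜ r (Finset.mem_compl.2 hr) r' (Finset.mem_compl.2 hr') hrr
        fin_cases i <;>
          simp [sched, jtA, if_neg hr, if_neg hr', reduceIte] <;>
          rcases hord with h | h <;>
          first | (left; linarith) | (right; linarith)
    · -- A vs open
      by_cases hr : r ∈ S1
      · obtain ⟨h1, h2⟩ := key1 r hr
        fin_cases i <;>
          simp [sched, jtA, jtO, if_pos hr, reduceIte] <;>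
          first | (left; linarith) | (right; linarith)
      · obtain ⟨h1, h2⟩ := key2 r hr
        fin_cases i <;>
          simp [sched, jtA, jtO, if_neg hr, reduceIte] <;>
          first | (left; linarith) | (right; linarith)
    · -- open vs X
      fin_cases k' <;> fin_cases i <;>
        simp [sched, jtX, jtO, reduceIte] <;>
        first | (left; linarith) | (right; linarith)
    · -- open vs A
      by_cases hr : r' ∈ S1
      · obtain ⟨h1, h2⟩ := key1 r' hr
        fin_cases i <;>
          simp [sched, jtA, jtO, if_pos hr, reduceIte] <;>
          first | (left; linarith) | (right; linarith)
      · obtain ⟨h1, h2⟩ := key2 r' hr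
        fin_cases i <;>
          simp [sched, jtA, jtO, if_neg hr, reduceIte] <;>
          first | (left; linarith) | (right; linarith)
    · -- open vs open : impossible
      exact absurd rfl hne
  refine ⟨sched m B a x S1, ⟨?_, ?_, ?_, ?_⟩, ?_, by ring⟩
  · -- nonnegativity
    rintro ((k | r) | u) - i
    · fin_cases k <;> fin_cases i <;>
        simp [sched, reduceIte] <;> linarith
    · by_cases hr : r ∈ S1
      · obtain ⟨h1, h2⟩ := key1 r hr
        fin_cases i <;> simp [sched, if_pos hr, reduceIte] <;> linarith
      · obtain ⟨h1, h2⟩ := key2 r hr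
        fin_cases i <;> simp [sched, if_neg hr, reduceIte] <;> linarith
    · fin_cases i <;> simp [sched, reduceIte] <;> linarith
  · -- machine disjointness
    intro i j _ k _ hne
    exact disj i j k hne
  · -- job disjointness across machines
    rintro ((k | r) | u) - i i' hii
    · fin_cases k <;> fin_cases i <;> fin_cases i' <;>
        first
        | exact absurd rfl hii
        | (simp [sched, jtX, reduceIte] <;>
            first | (left; linarith) | (right; linarith))
    · by_cases hr : r ∈ S1
      · obtain ⟨h1, h2⟩ := key1 r hr
        fin_cases i <;> fin_cases i' <;>
          first
          | exact absurd rfl hii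
          | (simp [sched, jtA, if_pos hr, reduceIte] <;>
              first | (left; linarith) | (right; linarith))
      · obtain ⟨h1, h2⟩ := key2 r hr
        fin_cases i <;> fin_cases i' <;>
          first
          | exact absurd rfl hii
          | (simp [sched, jtA, if_neg hr, reduceIte] <;>
              first | (left; linarith) | (right; linarith))
    · fin_cases i <;> fin_cases i' <;>
        first
        | exact absurd rfl hii
        | (simp [sched, jtO, reduceIte] <;>
            first | (left; linarith) | (right; linarith))
  · -- flow-shop precedence
    rintro ((k | r) | u) hj
    · constructor <;>
        (fin_cases k <;>
          simp [sched, redp, Sum.elim_inl, reduceIte] <;> linarith)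
    · by_cases hr : r ∈ S1
      · obtain ⟨h1, h2⟩ := key1 r hr
        constructor <;>
          (simp [sched, redp, Sum.elim_inl, Sum.elim_inr, if_pos hr,
            reduceIte] <;> linarith)
      · obtain ⟨h1, h2⟩ := key2 r hr
        constructor <;>
          (simp [sched, redp, Sum.elim_inl, Sum.elim_inr, if_neg hr,
            reduceIte] <;> linarith)
    · exact absurd hj (by simp [redF])
  · -- makespan
    rw [makespan]
    apply IsGreatest.csSup_eq
    constructor
    · refine ⟨Sum.inr (), memall _, 0, ?_⟩
      rw [jtO]
      simp [sched, reduceIte]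
      ring
    · rintro y ⟨j, -, i, rfl⟩
      revert i
      rcases j with (k | r) | u
      · intro i
        fin_cases k <;> fin_cases i <;>
          simp [sched, jtX, reduceIte] <;> linarith
      · intro i
        by_cases hr : r ∈ S1
        · obtain ⟨h1, h2⟩ := key1 r hr
          fin_cases i <;> simp [sched, jtA, if_pos hr, reduceIte] <;> linarith
        · obtain ⟨h1, h2⟩ := key2 r hr
          fin_cases i <;> simp [sched, jtA, if_neg hr, reduceIte] <;> linarith
      · intro i
        fin_cases i <;> simp [sched, jtO, reduceIte] <;> linarith
end
end

section
/- Let a_1, ..., a_m be positive integers with a_1 + ... + a_m = 2B and let x > B. Consider the instance with m+2 flow-shop jobs of processing times x, x, a_1, ..., a_m and one open-shop job of processing time B + 2x. If this instance admits a feasible schedule with makespan at most 3B + 6x, then there exists a subset S_1 ⊆ {1, ..., m} with Σ_{i∈S_1} a_i = B. -/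
open Finset

noncomputable section

lemma sum_len_le_of_disjoint {ι : Type*} (s : Finset ι) (st len : ι → ℝ) (l u : ℝ)
    (hlu : l ≤ u)
    (hlen : ∀ i ∈ s, 0 ≤ len i)
    (hl : ∀ i ∈ s, l ≤ st i) (hu : ∀ i ∈ s, st i + len i ≤ u)
    (hdisj : ∀ i ∈ s, ∀ j ∈ s, i ≠ j → st i + len i ≤ st j ∨ st j + len j ≤ st i) :
    ∑ i ∈ s, len i ≤ u - l := by
  have hpd : (s : Set ι).PairwiseDisjoint (fun i => Set.Ioo (st i) (st i + len i)) := by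
    intro i hi j hj hij
    rcases hdisj i hi j hj hij with h | h
    · exact Set.disjoint_left.mpr fun y hy hy' => absurd (hy.2.trans_le h) (lt_asymm hy'.1)
    · exact Set.disjoint_left.mpr fun y hy hy' => absurd (hy'.2.trans_le h) (lt_asymm hy.1)
  have h1 : ∀ i ∈ s, Set.Ioo (st i) (st i + len i) ⊆ Set.Icc l u := fun i hi =>
    Set.Ioo_subset_Icc_self.trans (Set.Icc_subset_Icc (hl i hi) (hu i hi))
  have hvol : ∑ i ∈ s, MeasureTheory.volume (Set.Ioo (st i) (st i + len i))
      ≤ ENNReal.ofReal (u - l) := by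
    rw [← MeasureTheory.measure_biUnion_finset hpd (fun i _ => measurableSet_Ioo)]
    calc MeasureTheory.volume (⋃ i ∈ s, Set.Ioo (st i) (st i + len i))
        ≤ MeasureTheory.volume (Set.Icc l u) :=
          MeasureTheory.measure_mono (Set.iUnion₂_subset h1)
      _ = ENNReal.ofReal (u - l) := Real.volume_Icc
  have h2 : ENNReal.ofReal (∑ i ∈ s, len i) ≤ ENNReal.ofReal (u - l) := by
    rw [ENNReal.ofReal_sum_of_nonneg hlen]
    simpa [Real.volume_Ioo] using hvol
  exact (ENNReal.ofReal_le_ofReal_iff (by linarith)).1 h2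

set_option maxHeartbeats 2000000

/-- Backward direction of the reduction from Partition: if the reduction instance has a
feasible schedule of makespan at most `3B + 6x`, then some subset of the `a i` sums to
`B`. -/
theorem stmt13 (m B : ℕ) (a : Fin m → ℕ) (ha : ∀ i, 0 < a i)
    (hsum : ∑ i, a i = 2 * B) (x : ℝ) (hx : (B : ℝ) < x)
    (S : ((Fin 2 ⊕ Fin m) ⊕ Unit) → Fin 3 → ℝ)
    (hfeas : Feasible (redF m) (redO m) (redp m a x) (redq m B x) S)
    (hmk : makespan (redF m) (redO m) (redp m a x) (redq m B x) S
        ≤ 3 * (B : ℝ) + 6 * x) :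
    ∃ S1 : Finset (Fin m), ∑ i ∈ S1, a i = B := by
  classical
  rcases Nat.eq_zero_or_pos B with hB0 | hBpos
  · exact ⟨∅, by simp [hB0]⟩
  have hB1 : (1 : ℝ) ≤ (B : ℝ) := by exact_mod_cast hBpos
  have hx0 : (0 : ℝ) < x := lt_of_le_of_lt (Nat.cast_nonneg B) hx
  obtain ⟨hS0, hmach, hjob, hprec⟩ := hfeas
  unfold makespan at hmk
  set L : ℝ := (B : ℝ) + 2 * x with hLdef
  have hL0 : 0 < L := by rw [hLdef]; linarith
  set t := jobTime (redF m) (redp m a x) (redq m B x) with htdef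
  have hFmem : ∀ k : Fin 2 ⊕ Fin m, (Sum.inl k) ∈ redF m := fun k =>
    Finset.mem_image.mpr ⟨k, Finset.mem_univ k, rfl⟩
  have hmem : ∀ j : (Fin 2 ⊕ Fin m) ⊕ Unit, j ∈ redF m ∪ redO m := by
    intro j
    rcases j with k | u
    · exact Finset.mem_union_left _ (hFmem k)
    · exact Finset.mem_union_right _ (by cases u; simp [redO])
  have htp : ∀ k : Fin 2 ⊕ Fin m, t (Sum.inl k) = redp m a x (Sum.inl k) := fun k => by
    rw [htdef]; exact if_pos (hFmem k)
  have htx : ∀ b : Fin 2, t (Sum.inl (Sum.inl b)) = x := fun b => by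
    rw [htp]; rfl
  have hta : ∀ i : Fin m, t (Sum.inl (Sum.inr i)) = (a i : ℝ) := fun i => by
    rw [htp]; rfl
  have htO : t (Sum.inr ()) = L := by
    rw [htdef]
    have : Sum.inr () ∉ redF m := by simp [redF]
    rw [jobTime, if_neg this]; rfl
  -- completion bound
  have hcomp : ∀ (j : (Fin 2 ⊕ Fin m) ⊕ Unit) (i : Fin 3), S j i + t j ≤ 3 * L := by
    intro j i
    have hsub : {y : ℝ | ∃ j ∈ redF m ∪ redO m, ∃ i : Fin 3, y = S j i + t j}
        ⊆ Set.range (fun p : ((Fin 2 ⊕ Fin m) ⊕ Unit) × Fin 3 => S p.1 p.2 + t p.1) := by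
      rintro y ⟨j, _, i, rfl⟩; exact ⟨(j, i), rfl⟩
    have hbdd : BddAbove {y : ℝ | ∃ j ∈ redF m ∪ redO m, ∃ i : Fin 3, y = S j i + t j} :=
      (Set.finite_range _).bddAbove.mono hsub
    have h := le_csSup hbdd (show S j i + t j ∈ _ from ⟨j, hmem j, i, rfl⟩)
    have h2 := h.trans hmk
    rw [hLdef]; linarith
  -- flow job basic facts
  have hfp : ∀ k : Fin 2 ⊕ Fin m, 0 < t (Sum.inl k) := by
    intro k
    rcases k with b | i
    · rw [htx]; exact hx0
    · rw [hta]; exact_mod_cast ha i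
  have hfnn : ∀ (k : Fin 2 ⊕ Fin m) (i : Fin 3), 0 ≤ S (Sum.inl k) i := fun k i =>
    hS0 _ (hmem _) i
  have hprec1 : ∀ k : Fin 2 ⊕ Fin m,
      S (Sum.inl k) 0 + t (Sum.inl k) ≤ S (Sum.inl k) 1 := fun k => by
    rw [htp]; exact (hprec _ (hFmem k)).1
  have hprec2 : ∀ k : Fin 2 ⊕ Fin m,
      S (Sum.inl k) 1 + t (Sum.inl k) ≤ S (Sum.inl k) 2 := fun k => by
    rw [htp]; exact (hprec _ (hFmem k)).2
  have hOd : ∀ (k : Fin 2 ⊕ Fin m) (i : Fin 3),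
      S (Sum.inl k) i + t (Sum.inl k) ≤ S (Sum.inr ()) i ∨
      S (Sum.inr ()) i + L ≤ S (Sum.inl k) i := by
    intro k i
    have h := hmach i _ (hmem (Sum.inl k)) _ (hmem (Sum.inr ())) (by simp)
    rw [htO] at h; exact h
  have hff : ∀ (i : Fin 3) (k k' : Fin 2 ⊕ Fin m), k ≠ k' →
      S (Sum.inl k) i + t (Sum.inl k) ≤ S (Sum.inl k') i ∨
      S (Sum.inl k') i + t (Sum.inl k') ≤ S (Sum.inl k) i := by
    intro i k k' hkk
    exact hmach i _ (hmem (Sum.inl k)) _ (hmem (Sum.inl k')) (by simpa using hkk)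
  -- O job facts
  have hoC : ∀ i : Fin 3, S (Sum.inr ()) i + L ≤ 3 * L := by
    intro i; have := hcomp (Sum.inr ()) i; rw [htO] at this; exact this
  have ho0 : ∀ i : Fin 3, 0 ≤ S (Sum.inr ()) i := fun i => hS0 _ (hmem _) i
  have hoD : ∀ i i' : Fin 3, i ≠ i' →
      S (Sum.inr ()) i + L ≤ S (Sum.inr ()) i' ∨
      S (Sum.inr ()) i' + L ≤ S (Sum.inr ()) i := by
    intro i i' h
    have h2 := hjob _ (hmem (Sum.inr ())) i i' h
    rw [htO] at h2; exact h2
  have hsort : ∀ i j k : Fin 3, i ≠ j → j ≠ k → i ≠ k →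
      S (Sum.inr ()) i ≤ S (Sum.inr ()) j → S (Sum.inr ()) j ≤ S (Sum.inr ()) k →
      S (Sum.inr ()) i = 0 ∧ S (Sum.inr ()) j = L ∧ S (Sum.inr ()) k = 2 * L := by
    intro i j k hij hjk hik h1 h2
    have d1 : S (Sum.inr ()) i + L ≤ S (Sum.inr ()) j := by
      rcases hoD i j hij with h | h
      · exact h
      · exfalso; linarith
    have d2 : S (Sum.inr ()) j + L ≤ S (Sum.inr ()) k := by
      rcases hoD j k hjk with h | h
      · exact h
      · exfalso; linarith
    have c1 := hoC k
    have c2 := ho0 i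
    refine ⟨by linarith, by linarith, by linarith⟩
  -- machine characterizations
  have hlow : ∀ i : Fin 3, S (Sum.inr ()) i = 0 → ∀ k : Fin 2 ⊕ Fin m,
      L ≤ S (Sum.inl k) i := by
    intro i hi k
    rcases hOd k i with h | h
    · exfalso; have := hfp k; have := hfnn k i; rw [hi] at h; linarith
    · rw [hi] at h; linarith
  have hhigh : ∀ i : Fin 3, S (Sum.inr ()) i = 2 * L → ∀ k : Fin 2 ⊕ Fin m,
      S (Sum.inl k) i + t (Sum.inl k) ≤ 2 * L := by
    intro i hi k
    rcases hOd k i with h | h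
    · rw [hi] at h; exact h
    · exfalso; have := hcomp (Sum.inl k) i; have := hfp k; rw [hi] at h; linarith
  have hmidc : ∀ i : Fin 3, S (Sum.inr ()) i = L → ∀ k : Fin 2 ⊕ Fin m,
      S (Sum.inl k) i + t (Sum.inl k) ≤ L ∨ 2 * L ≤ S (Sum.inl k) i := by
    intro i hi k
    rcases hOd k i with h | h
    · left; rw [hi] at h; exact h
    · right; rw [hi] at h; linarith
  -- total flow load
  have hflowsum : ∑ k : Fin 2 ⊕ Fin m, t (Sum.inl k) = 2 * x + 2 * (B : ℝ) := by
    rw [Fintype.sum_sum_type]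
    have h1 : ∑ b : Fin 2, t (Sum.inl (Sum.inl b)) = 2 * x := by
      simp [htx]
    have h2 : ∑ i : Fin m, t (Sum.inl (Sum.inr i)) = 2 * (B : ℝ) := by
      simp only [hta]
      rw [← Nat.cast_sum, hsum]; push_cast; ring
    rw [h1, h2]
  have hwindow : ∀ (i : Fin 3) (l : ℝ),
      (∀ k : Fin 2 ⊕ Fin m, l ≤ S (Sum.inl k) i) →
      (∀ k : Fin 2 ⊕ Fin m, S (Sum.inl k) i + t (Sum.inl k) ≤ l + L) → False := by
    intro i l h1 h2
    have key := sum_len_le_of_disjoint Finset.univ (fun k => S (Sum.inl k) i)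
      (fun k => t (Sum.inl k)) l (l + L) (by linarith)
      (fun k _ => (hfp k).le) (fun k _ => h1 k) (fun k _ => h2 k)
      (fun k _ k' _ hkk => hff i k k' hkk)
    rw [hflowsum] at key
    rw [hLdef] at key
    linarith
  -- now the six cases; first the winning case D as a general claim
  have caseD : S (Sum.inr ()) 0 = 2 * L → S (Sum.inr ()) 1 = L → S (Sum.inr ()) 2 = 0 →
      ∃ S1 : Finset (Fin m), ∑ i ∈ S1, a i = B := by
    intro h0 h1 h2
    have hM0 : ∀ k, S (Sum.inl k) 0 + t (Sum.inl k) ≤ 2 * L := hhigh 0 h0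
    have hM2 : ∀ k, L ≤ S (Sum.inl k) 2 := hlow 2 h2
    have hEWk := hmidc 1 h1
    set Ep : (Fin 2 ⊕ Fin m) → Prop :=
      fun k => S (Sum.inl k) 1 + t (Sum.inl k) ≤ L with hEp
    have hWp : ∀ k, ¬ Ep k → 2 * L ≤ S (Sum.inl k) 1 := fun k h => (hEWk k).resolve_left h
    -- not both x-jobs early
    have hx2 : ∀ b b' : Fin 2, b ≠ b' → Ep (Sum.inl b) → Ep (Sum.inl b') → False := by
      intro b b' hne hb hb'
      have hpair : ∀ c ∈ ({Sum.inl b, Sum.inl b'} : Finset (Fin 2 ⊕ Fin m)),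
          x ≤ S (Sum.inl c) 1 ∧ S (Sum.inl c) 1 + t (Sum.inl c) ≤ L := by
        intro c hc
        simp only [Finset.mem_insert, Finset.mem_singleton] at hc
        rcases hc with rfl | rfl
        · refine ⟨?_, hb⟩
          have p := hprec1 (Sum.inl b); rw [htx] at p
          have h0 := hfnn (Sum.inl b) 0; linarith
        · refine ⟨?_, hb'⟩
          have p := hprec1 (Sum.inl b'); rw [htx] at p
          have := hfnn (Sum.inl b') 0; linarith
      have key := sum_len_le_of_disjoint ({Sum.inl b, Sum.inl b'} : Finset (Fin 2 ⊕ Fin m))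
        (fun k => S (Sum.inl k) 1) (fun k => t (Sum.inl k)) x L (by rw [hLdef]; linarith)
        (fun k _ => (hfp k).le) (fun k hk => (hpair k hk).1) (fun k hk => (hpair k hk).2)
        (fun k _ k' _ hkk => hff 1 k k' hkk)
      rw [Finset.sum_pair (by simpa using hne)] at key
      rw [htx, htx, hLdef] at key
      linarith
    -- not both x-jobs late
    have hx2' : ∀ b b' : Fin 2, b ≠ b' → ¬ Ep (Sum.inl b) → ¬ Ep (Sum.inl b') → False := by
      intro b b' hne hb hb'
      have hpair : ∀ c ∈ ({Sum.inl b, Sum.inl b'} : Finset (Fin 2 ⊕ Fin m)),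
          2 * L ≤ S (Sum.inl c) 1 ∧ S (Sum.inl c) 1 + t (Sum.inl c) ≤ 3 * L - x := by
        intro c hc
        have hcx : ∃ bb : Fin 2, (Sum.inl bb : Fin 2 ⊕ Fin m) = c ∧ ¬ Ep (Sum.inl bb) := by
          simp only [Finset.mem_insert, Finset.mem_singleton] at hc
          rcases hc with rfl | rfl
          · exact ⟨b, rfl, hb⟩
          · exact ⟨b', rfl, hb'⟩
        obtain ⟨bb, rfl, hbb⟩ := hcx
        refine ⟨hWp _ hbb, ?_⟩
        have p := hprec2 (Sum.inl bb); rw [htx] at p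
        have c2 := hcomp (Sum.inl (Sum.inl bb)) 2; rw [htx] at c2
        rw [htx]; linarith
      have key := sum_len_le_of_disjoint ({Sum.inl b, Sum.inl b'} : Finset (Fin 2 ⊕ Fin m))
        (fun k => S (Sum.inl k) 1) (fun k => t (Sum.inl k)) (2 * L) (3 * L - x)
        (by rw [hLdef]; linarith)
        (fun k _ => (hfp k).le) (fun k hk => (hpair k hk).1) (fun k hk => (hpair k hk).2)
        (fun k _ k' _ hkk => hff 1 k k' hkk)
      rw [Finset.sum_pair (by simpa using hne)] at key
      rw [htx, htx, hLdef] at key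
      linarith
    -- split the x-jobs
    have hsplit : ∃ bE bW : Fin 2, Ep (Sum.inl bE) ∧ ¬ Ep (Sum.inl bW) := by
      by_cases hb0 : Ep (Sum.inl 0)
      · by_cases hb1 : Ep (Sum.inl 1)
        · exact (hx2 0 1 (by decide) hb0 hb1).elim
        · exact ⟨0, 1, hb0, hb1⟩
      · by_cases hb1 : Ep (Sum.inl 1)
        · exact ⟨1, 0, hb1, hb0⟩
        · exact (hx2' 0 1 (by decide) hb0 hb1).elim
    obtain ⟨bE, bW, hbE, hbW⟩ := hsplit
    set Ea : Finset (Fin m) := Finset.univ.filter (fun i => Ep (Sum.inr i)) with hEadef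
    set Wa : Finset (Fin m) := Finset.univ.filter (fun i => ¬ Ep (Sum.inr i)) with hWadef
    have hEmem : ∀ i ∈ Ea, S (Sum.inl (Sum.inr i)) 1 + (a i : ℝ) ≤ L := by
      intro i hi
      have := (Finset.mem_filter.mp hi).2
      rw [hEp] at this; rw [← hta i]; exact this
    have hWmem : ∀ i ∈ Wa, 2 * L ≤ S (Sum.inl (Sum.inr i)) 1 := by
      intro i hi
      exact hWp _ (Finset.mem_filter.mp hi).2
    -- Claim A : early a-load ≤ B
    have claimA : ∑ i ∈ Ea, (a i : ℝ) ≤ (B : ℝ) := by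
      set u := S (Sum.inl (Sum.inl bE)) 0 with hu
      have hu0 : 0 ≤ u := hfnn _ _
      have huB : u + 2 * x ≤ L := by
        have p := hprec1 (Sum.inl bE); rw [htx] at p
        have e := hbE; rw [hEp, htx] at e
        linarith
      set P : Finset (Fin m) := Ea.filter (fun i => S (Sum.inl (Sum.inr i)) 0 + (a i : ℝ) ≤ u)
        with hPdef
      set Q : Finset (Fin m) := Ea.filter (fun i => ¬ (S (Sum.inl (Sum.inr i)) 0 + (a i : ℝ) ≤ u))
        with hQdef
      have hPsum : ∑ i ∈ P, (a i : ℝ) ≤ u := by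
        have key := sum_len_le_of_disjoint P (fun i => S (Sum.inl (Sum.inr i)) 0)
          (fun i => (a i : ℝ)) 0 u hu0
          (fun i _ => by positivity)
          (fun i _ => hfnn _ _)
          (fun i hi => (Finset.mem_filter.mp hi).2)
          (fun i _ j _ hij => by
            have := hff 0 (Sum.inr i) (Sum.inr j) (by simpa using hij)
            rw [hta, hta] at this; exact this)
        linarith
      have hQlow : ∀ i ∈ Q, u + x ≤ S (Sum.inl (Sum.inr i)) 0 := by
        intro i hi
        have hni := (Finset.mem_filter.mp hi).2
        have hd := hff 0 (Sum.inr i) (Sum.inl bE) (by simp)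
        rw [hta, htx] at hd
        rcases hd with h | h
        · exact absurd h hni
        · linarith
      have hQsum : ∑ i ∈ Q, (a i : ℝ) ≤ (B : ℝ) - u := by
        have hnotin : (Sum.inl bE : Fin 2 ⊕ Fin m) ∉ Q.image Sum.inr := by simp
        have key := sum_len_le_of_disjoint (insert (Sum.inl bE) (Q.image Sum.inr))
          (fun k => S (Sum.inl k) 1) (fun k => t (Sum.inl k)) (u + x) L
          (by linarith)
          (fun k _ => (hfp k).le)
          (fun k hk => by
            rcases Finset.mem_insert.mp hk with rfl | hk'
            · have p := hprec1 (Sum.inl bE); rw [htx] at p; linarith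
            · obtain ⟨i, hiQ, rfl⟩ := Finset.mem_image.mp hk'
              have p := hprec1 (Sum.inr i); rw [hta] at p
              have hl := hQlow i hiQ
              have : (0:ℝ) ≤ (a i : ℝ) := by positivity
              linarith)
          (fun k hk => by
            rcases Finset.mem_insert.mp hk with rfl | hk'
            · have e := hbE; rw [hEp] at e; exact e
            · obtain ⟨i, hiQ, rfl⟩ := Finset.mem_image.mp hk'
              have hiE : i ∈ Ea := Finset.mem_of_mem_filter i hiQ
              have h2 := hEmem i hiE
              have e := hta i; linarith)
          (fun k _ k' _ hkk => hff 1 k k' hkk)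
        have hsum_eq : ∑ k ∈ insert (Sum.inl bE) (Q.image Sum.inr), t (Sum.inl k)
            = x + ∑ i ∈ Q, (a i : ℝ) := by
          rw [Finset.sum_insert hnotin, htx]
          congr 1
          rw [Finset.sum_image (fun i _ j _ h => Sum.inr_injective h)]
          exact Finset.sum_congr rfl fun i _ => hta i
        rw [hsum_eq] at key
        rw [hLdef] at key huB
        linarith
      have hsplitEa := Finset.sum_filter_add_sum_filter_not Ea
        (fun i => S (Sum.inl (Sum.inr i)) 0 + (a i : ℝ) ≤ u) (fun i => (a i : ℝ))
      rw [← hPdef, ← hQdef] at hsplitEa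
      linarith
    -- Claim B : late a-load ≤ B
    have claimB : ∑ i ∈ Wa, (a i : ℝ) ≤ (B : ℝ) := by
      set v := S (Sum.inl (Sum.inl bW)) 2 with hv
      have hvlow : 2 * L + x ≤ v := by
        have p := hprec2 (Sum.inl bW); rw [htx] at p
        have w := hWp _ hbW
        linarith
      have hvC : v + x ≤ 3 * L := by
        have := hcomp (Sum.inl (Sum.inl bW)) 2; rw [htx] at this; exact this
      set P' : Finset (Fin m) := Wa.filter (fun i => v + x ≤ S (Sum.inl (Sum.inr i)) 2)
        with hP'def
      set Q' : Finset (Fin m) := Wa.filter (fun i => ¬ (v + x ≤ S (Sum.inl (Sum.inr i)) 2))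
        with hQ'def
      have hP'sum : ∑ i ∈ P', (a i : ℝ) ≤ 3 * L - (v + x) := by
        have key := sum_len_le_of_disjoint P' (fun i => S (Sum.inl (Sum.inr i)) 2)
          (fun i => (a i : ℝ)) (v + x) (3 * L) (by linarith)
          (fun i _ => by positivity)
          (fun i hi => (Finset.mem_filter.mp hi).2)
          (fun i _ => by
            have := hcomp (Sum.inl (Sum.inr i)) 2; rw [hta] at this; exact this)
          (fun i _ j _ hij => by
            have := hff 2 (Sum.inr i) (Sum.inr j) (by simpa using hij)
            rw [hta, hta] at this; exact this)
        linarith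
      have hQ'high : ∀ i ∈ Q', S (Sum.inl (Sum.inr i)) 2 + (a i : ℝ) ≤ v := by
        intro i hi
        have hni := (Finset.mem_filter.mp hi).2
        have hd := hff 2 (Sum.inr i) (Sum.inl bW) (by simp)
        rw [hta, htx] at hd
        rcases hd with h | h
        · exact h
        · exact absurd h hni
      have hQ'sum : ∑ i ∈ Q', (a i : ℝ) ≤ v - 2 * L - x := by
        have hnotin : (Sum.inl bW : Fin 2 ⊕ Fin m) ∉ Q'.image Sum.inr := by simp
        have key := sum_len_le_of_disjoint (insert (Sum.inl bW) (Q'.image Sum.inr))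
          (fun k => S (Sum.inl k) 1) (fun k => t (Sum.inl k)) (2 * L) v
          (by linarith)
          (fun k _ => (hfp k).le)
          (fun k hk => by
            rcases Finset.mem_insert.mp hk with rfl | hk'
            · exact hWp _ hbW
            · obtain ⟨i, hiQ, rfl⟩ := Finset.mem_image.mp hk'
              exact hWmem i (Finset.mem_of_mem_filter i hiQ))
          (fun k hk => by
            rcases Finset.mem_insert.mp hk with rfl | hk'
            · have p := hprec2 (Sum.inl bW); rw [htx] at p
              have e : t (Sum.inl (Sum.inl bW)) = x := htx bW
              linarith
            · obtain ⟨i, hiQ, rfl⟩ := Finset.mem_image.mp hk'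
              have p := hprec2 (Sum.inr i); rw [hta] at p
              have hq := hQ'high i hiQ
              have : (0:ℝ) ≤ (a i : ℝ) := by positivity
              have e := hta i; linarith)
          (fun k _ k' _ hkk => hff 1 k k' hkk)
        have hsum_eq : ∑ k ∈ insert (Sum.inl bW) (Q'.image Sum.inr), t (Sum.inl k)
            = x + ∑ i ∈ Q', (a i : ℝ) := by
          rw [Finset.sum_insert hnotin, htx]
          congr 1
          rw [Finset.sum_image (fun i _ j _ h => Sum.inr_injective h)]
          exact Finset.sum_congr rfl fun i _ => hta i
        rw [hsum_eq] at key
        linarith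
      have hsplitWa := Finset.sum_filter_add_sum_filter_not Wa
        (fun i => v + x ≤ S (Sum.inl (Sum.inr i)) 2) (fun i => (a i : ℝ))
      rw [← hP'def, ← hQ'def] at hsplitWa
      rw [hLdef] at hP'sum hQ'sum
      linarith
    -- combine
    have htotal : ∑ i ∈ Ea, (a i : ℝ) + ∑ i ∈ Wa, (a i : ℝ) = 2 * (B : ℝ) := by
      have h := Finset.sum_filter_add_sum_filter_not Finset.univ
        (fun i => Ep (Sum.inr i)) (fun i : Fin m => (a i : ℝ))
      rw [← hEadef, ← hWadef] at h
      rw [h, ← Nat.cast_sum, hsum]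
      push_cast; ring
    have hEaB : ∑ i ∈ Ea, (a i : ℝ) = (B : ℝ) := by linarith
    refine ⟨Ea, ?_⟩
    have hc : ((∑ i ∈ Ea, a i : ℕ) : ℝ) = (B : ℝ) := by push_cast; exact hEaB
    exact_mod_cast hc
  -- the five impossible configurations
  have caseA : S (Sum.inr ()) 0 = 0 → S (Sum.inr ()) 1 = L → S (Sum.inr ()) 2 = 2 * L →
      False := by
    intro h0 h1 h2
    have l0 := hlow 0 h0 (Sum.inl 0)
    have p1 := hprec1 (Sum.inl 0)
    have p2 := hprec2 (Sum.inl 0)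
    have tp := hfp (Sum.inl 0)
    rcases hmidc 1 h1 (Sum.inl 0) with hm | hm
    · linarith
    · have hh := hhigh 2 h2 (Sum.inl 0); linarith
  have caseB : S (Sum.inr ()) 0 = 0 → S (Sum.inr ()) 1 = 2 * L → S (Sum.inr ()) 2 = L →
      False := by
    intro h0 h1 h2
    exact hwindow 1 L
      (fun k => by have := hlow 0 h0 k; have := hprec1 k; have := (hfp k).le; linarith)
      (fun k => by have := hhigh 1 h1 k; linarith)
  have caseC : S (Sum.inr ()) 0 = L → S (Sum.inr ()) 1 = 0 → S (Sum.inr ()) 2 = 2 * L →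
      False := by
    intro h0 h1 h2
    exact hwindow 2 L
      (fun k => by have := hlow 1 h1 k; have := hprec2 k; have := (hfp k).le; linarith)
      (fun k => by have := hhigh 2 h2 k; linarith)
  have caseE : S (Sum.inr ()) 0 = L → S (Sum.inr ()) 1 = 2 * L → S (Sum.inr ()) 2 = 0 →
      False := by
    intro h0 h1 h2
    refine hwindow 0 0 (fun k => hfnn k 0) (fun k => ?_)
    rcases hmidc 0 h0 k with hm | hm
    · linarith
    · have := hhigh 1 h1 k; have := hprec1 k; have := hfp k; linarith
  have caseF : S (Sum.inr ()) 0 = 2 * L → S (Sum.inr ()) 1 = 0 → S (Sum.inr ()) 2 = L →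
      False := by
    intro h0 h1 h2
    refine hwindow 2 (2 * L) (fun k => ?_) (fun k => ?_)
    · rcases hmidc 2 h2 k with hm | hm
      · have := hlow 1 h1 k; have := hprec2 k; have := hfp k; linarith
      · linarith
    · have := hcomp (Sum.inl k) 2; linarith
  -- dispatch on the ordering of the open-shop operations
  rcases le_total (S (Sum.inr ()) 0) (S (Sum.inr ()) 1) with h01 | h01 <;>
    rcases le_total (S (Sum.inr ()) 1) (S (Sum.inr ()) 2) with h12 | h12 <;>
      rcases le_total (S (Sum.inr ()) 0) (S (Sum.inr ()) 2) with h02 | h02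
  · obtain ⟨e0, e1, e2⟩ := hsort 0 1 2 (by decide) (by decide) (by decide) h01 h12
    exact (caseA e0 e1 e2).elim
  · obtain ⟨e0, e1, e2⟩ := hsort 0 1 2 (by decide) (by decide) (by decide) h01 h12
    exact (caseA e0 e1 e2).elim
  · obtain ⟨e0, e2, e1⟩ := hsort 0 2 1 (by decide) (by decide) (by decide) h02 h12
    exact (caseB e0 e1 e2).elim
  · obtain ⟨e2, e0, e1⟩ := hsort 2 0 1 (by decide) (by decide) (by decide) h02 h01
    exact (caseE e0 e1 e2).elim
  · obtain ⟨e1, e0, e2⟩ := hsort 1 0 2 (by decide) (by decide) (by decide) h01 h02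
    exact (caseC e0 e1 e2).elim
  · obtain ⟨e1, e2, e0⟩ := hsort 1 2 0 (by decide) (by decide) (by decide) h12 h02
    exact (caseF e0 e1 e2).elim
  · obtain ⟨e2, e1, e0⟩ := hsort 2 1 0 (by decide) (by decide) (by decide) h12 h01
    exact caseD e0 e1 e2
  · obtain ⟨e2, e1, e0⟩ := hsort 2 1 0 (by decide) (by decide) (by decide) h12 h01
    exact caseD e0 e1 e2
end
end

section
/- Suppose F is nonempty and O = {J_n} consists of a single open-shop job with processing time q_n, and P(F) ≤ q_n. Then there exists a feasible schedule with makespan exactly 3·q_n, and every feasible schedule has makespan at least 3·q_n; hence the optimal makespan equals 3·q_n. -/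
open Finset

noncomputable section

/-- Lemma 6.1: if `O = {jn}` and `P(F) ≤ q_n`, then there is a feasible schedule of
makespan exactly `3 q_n`, every feasible schedule has makespan at least `3 q_n`,
and hence the optimal makespan equals `3 q_n`. -/
theorem stmt14 {J : Type*} [DecidableEq J] (F : Finset J) (jn : J) (p q : J → ℝ)
    (hdisj : Disjoint F {jn})
    (hp : ∀ j ∈ F, 0 < p j) (hq : 0 < q jn)
    (hF : F.Nonempty)
    (hPF : (∑ j ∈ F, p j) ≤ q jn) :
    (∃ S : J → Fin 3 → ℝ, Feasible F {jn} p q S ∧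
        makespan F {jn} p q S = 3 * q jn) ∧
    (∀ S : J → Fin 3 → ℝ, Feasible F {jn} p q S →
        3 * q jn ≤ makespan F {jn} p q S) := by
  classical
  have hjnF : jn ∉ F := fun h =>
    Finset.disjoint_left.mp hdisj h (Finset.mem_singleton_self jn)
  have hjtn : jobTime F p q jn = q jn := if_neg hjnF
  have hjtF : ∀ j ∈ F, jobTime F p q j = p j := fun j hj => if_pos hj
  have hi3 : ∀ i : Fin 3, i = 0 ∨ i = 1 ∨ i = 2 := by decide
  -- ranking of flow jobs
  set r : J → ℕ := fun j => if h : j ∈ F then (F.equivFin ⟨j, h⟩ : ℕ) else 0 with hr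
  have hrinj : ∀ j ∈ F, ∀ k ∈ F, r j = r k → j = k := by
    intro j hj k hk h
    simp only [hr, dif_pos hj, dif_pos hk] at h
    have := F.equivFin.injective (Fin.val_injective h)
    exact Subtype.ext_iff.mp this
  -- offsets
  set σ : J → ℝ := fun j => ∑ j' ∈ F.filter (fun j' => r j' < r j), p j' with hσ
  have hσ0 : ∀ j, 0 ≤ σ j := by
    intro j
    exact Finset.sum_nonneg fun x hx => (hp x (Finset.mem_filter.mp hx).1).le
  have hsub : ∀ j ∈ F, insert j (F.filter (fun j' => r j' < r j)) ⊆ F := by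
    intro j hj x hx
    rcases Finset.mem_insert.mp hx with h | h
    · exact h ▸ hj
    · exact (Finset.mem_filter.mp h).1
  have hnotmem : ∀ j : J, j ∉ F.filter (fun j' => r j' < r j) := by
    intro j h
    exact lt_irrefl _ (Finset.mem_filter.mp h).2
  have hσp : ∀ j ∈ F, σ j + p j ≤ ∑ j' ∈ F, p j' := by
    intro j hj
    calc σ j + p j = ∑ j' ∈ insert j (F.filter (fun j' => r j' < r j)), p j' := by
          rw [Finset.sum_insert (hnotmem j)]; ring
      _ ≤ ∑ j' ∈ F, p j' := Finset.sum_le_sum_of_subset_of_nonneg (hsub j hj)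
          (fun x hx _ => (hp x hx).le)
  have hσq : ∀ j ∈ F, σ j + p j ≤ q jn := fun j hj => (hσp j hj).trans hPF
  have hpq : ∀ j ∈ F, p j ≤ q jn := fun j hj => by
    have := hσ0 j; have := hσq j hj; linarith
  have hchain : ∀ j ∈ F, ∀ k ∈ F, r j < r k → σ j + p j ≤ σ k := by
    intro j hj k hk hlt
    have hsub2 : insert j (F.filter (fun j' => r j' < r j)) ⊆
        F.filter (fun j' => r j' < r k) := by
      intro x hx
      rcases Finset.mem_insert.mp hx with h | h
      · subst h; exact Finset.mem_filter.mpr ⟨hj, hlt⟩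
      · rcases Finset.mem_filter.mp h with ⟨h1, h2⟩
        exact Finset.mem_filter.mpr ⟨h1, h2.trans hlt⟩
    calc σ j + p j = ∑ j' ∈ insert j (F.filter (fun j' => r j' < r j)), p j' := by
          rw [Finset.sum_insert (hnotmem j)]; ring
      _ ≤ σ k := Finset.sum_le_sum_of_subset_of_nonneg hsub2
          (fun x hx _ => (hp x (Finset.mem_filter.mp hx).1).le)
  -- the schedule
  set S : J → Fin 3 → ℝ := fun j i =>
    if j = jn then (if i = 0 then 2 * q jn else if i = 1 then 0 else q jn)
    else (i : ℕ) * q jn + σ j with hS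
  have hSF : ∀ j ∈ F, ∀ i : Fin 3, S j i = (i : ℕ) * q jn + σ j := by
    intro j hj i
    have hne : j ≠ jn := by rintro rfl; exact hjnF hj
    simp only [hS, if_neg hne]
  have hSF0 : ∀ j ∈ F, S j 0 = σ j := by
    intro j hj; rw [hSF j hj 0]; norm_num
  have hSF1 : ∀ j ∈ F, S j 1 = q jn + σ j := by
    intro j hj; rw [hSF j hj 1]; norm_num
  have hSF2 : ∀ j ∈ F, S j 2 = 2 * q jn + σ j := by
    intro j hj; rw [hSF j hj 2]; norm_num
  have hSn0 : S jn 0 = 2 * q jn := by simp [hS]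
  have hSn1 : S jn 1 = 0 := by simp [hS]
  have hSn2 : S jn 2 = q jn := by simp [hS]
  have hmem : ∀ j ∈ F ∪ ({jn} : Finset J), j = jn ∨ j ∈ F := by
    intro j hj
    rcases Finset.mem_union.mp hj with h | h
    · exact Or.inr h
    · exact Or.inl (Finset.mem_singleton.mp h)
  have hfeas : Feasible F {jn} p q S := by
    refine ⟨?_, ?_, ?_, ?_⟩
    · -- nonnegativity
      intro j hj i
      rcases hmem j hj with h | h
      · rcases hi3 i with hi | hi | hi <;> subst hi <;> rw [h]
        · rw [hSn0]; linarith
        · rw [hSn1]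
        · rw [hSn2]; linarith
      · rw [hSF j h i]
        have := hσ0 j
        positivity
    · -- machine disjointness
      intro i j hj k hk hjk
      rcases hmem j hj with h | h
      · rcases hmem k hk with h' | h'
        · exact absurd (h.trans h'.symm) hjk
        · rw [h, hjtn, hjtF k h']
          have h1 := hσ0 k
          have h2 := hσq k h'
          rcases hi3 i with hi | hi | hi <;> subst hi
          · right; rw [hSn0, hSF0 k h']; linarith
          · left; rw [hSn1, hSF1 k h']; linarith
          · left; rw [hSn2, hSF2 k h']; linarith
      · rcases hmem k hk with h' | h'
        · rw [h', hjtn, hjtF j h]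
          have h1 := hσ0 j
          have h2 := hσq j h
          rcases hi3 i with hi | hi | hi <;> subst hi
          · left; rw [hSn0, hSF0 j h]; linarith
          · right; rw [hSn1, hSF1 j h]; linarith
          · right; rw [hSn2, hSF2 j h]; linarith
        · rw [hjtF j h, hjtF k h', hSF j h i, hSF k h' i]
          have hrne : r j ≠ r k := fun he => hjk (hrinj j h k h' he)
          rcases hrne.lt_or_gt with hlt | hlt
          · left; have := hchain j h k h' hlt; linarith
          · right; have := hchain k h' j h hlt; linarith
    · -- per-job disjointness
      intro j hj i i' hii'
      rcases hmem j hj with h | h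
      · rw [h, hjtn]
        rcases hi3 i with hi | hi | hi <;> rcases hi3 i' with hi' | hi' | hi' <;>
            subst hi <;> subst hi'
        · exact absurd rfl hii'
        · right; rw [hSn0, hSn1]; linarith
        · right; rw [hSn0, hSn2]; linarith
        · left; rw [hSn0, hSn1]; linarith
        · exact absurd rfl hii'
        · left; rw [hSn1, hSn2]; linarith
        · left; rw [hSn0, hSn2]; linarith
        · right; rw [hSn1, hSn2]; linarith
        · exact absurd rfl hii'
      · rw [hjtF j h]
        have h2 := hpq j h
        have h3 := hp j h
        rcases hi3 i with hi | hi | hi <;> rcases hi3 i' with hi' | hi' | hi' <;>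
            subst hi <;> subst hi'
        · exact absurd rfl hii'
        · left; rw [hSF0 j h, hSF1 j h]; linarith
        · left; rw [hSF0 j h, hSF2 j h]; linarith
        · right; rw [hSF0 j h, hSF1 j h]; linarith
        · exact absurd rfl hii'
        · left; rw [hSF1 j h, hSF2 j h]; linarith
        · right; rw [hSF0 j h, hSF2 j h]; linarith
        · right; rw [hSF1 j h, hSF2 j h]; linarith
        · exact absurd rfl hii'
    · -- flow order
      intro j hj
      rw [hSF0 j hj, hSF1 j hj, hSF2 j hj]
      have := hpq j hj
      constructor <;> linarith
  -- makespan of the constructed schedule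
  have hub : ∀ x ∈ {x : ℝ | ∃ j ∈ F ∪ ({jn} : Finset J), ∃ i : Fin 3,
      x = S j i + jobTime F p q j}, x ≤ 3 * q jn := by
    rintro x ⟨j, hj, i, rfl⟩
    rcases hmem j hj with h | h
    · rw [h, hjtn]
      rcases hi3 i with hi | hi | hi <;> subst hi
      · rw [hSn0]; linarith
      · rw [hSn1]; linarith
      · rw [hSn2]; linarith
    · rw [hjtF j h, hSF j h i]
      have h2 := hσq j h
      have hile : ((i : ℕ) : ℝ) ≤ 2 := by
        have := i.is_lt
        exact_mod_cast Nat.lt_succ_iff.mp this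
      nlinarith
  have hmem3 : (3 : ℝ) * q jn ∈ {x : ℝ | ∃ j ∈ F ∪ ({jn} : Finset J), ∃ i : Fin 3,
      x = S j i + jobTime F p q j} := by
    refine ⟨jn, Finset.mem_union_right _ (Finset.mem_singleton_self jn), 0, ?_⟩
    rw [hSn0, hjtn]; ring
  have hmk : makespan F {jn} p q S = 3 * q jn := by
    unfold makespan
    apply le_antisymm
    · exact csSup_le ⟨_, hmem3⟩ hub
    · exact le_csSup ⟨3 * q jn, hub⟩ hmem3
  refine ⟨⟨S, hfeas, hmk⟩, ?_⟩
  -- lower bound for every feasible schedule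
  intro T hT
  obtain ⟨hT0, _hTm, hTj, _hTf⟩ := hT
  have hjnmem : jn ∈ F ∪ ({jn} : Finset J) :=
    Finset.mem_union_right _ (Finset.mem_singleton_self jn)
  have d01 := hTj jn hjnmem 0 1 (by decide)
  have d02 := hTj jn hjnmem 0 2 (by decide)
  have d12 := hTj jn hjnmem 1 2 (by decide)
  rw [hjtn] at d01 d02 d12
  have h0 := hT0 jn hjnmem 0
  have h1 := hT0 jn hjnmem 1
  have h2 := hT0 jn hjnmem 2
  have hex : ∃ i : Fin 3, 2 * q jn ≤ T jn i := by
    rcases d01 with d01 | d01 <;> rcases d02 with d02 | d02 <;> rcases d12 with d12 | d12 <;>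
      first
        | exact ⟨0, by linarith⟩
        | exact ⟨1, by linarith⟩
        | exact ⟨2, by linarith⟩
  obtain ⟨i, hi⟩ := hex
  have hxmem : T jn i + jobTime F p q jn ∈ {x : ℝ | ∃ j ∈ F ∪ ({jn} : Finset J),
      ∃ i : Fin 3, x = T j i + jobTime F p q j} := ⟨jn, hjnmem, i, rfl⟩
  have hfin : {x : ℝ | ∃ j ∈ F ∪ ({jn} : Finset J),
      ∃ i : Fin 3, x = T j i + jobTime F p q j}.Finite := by
    apply Set.Finite.subset (Set.Finite.image
      (f := fun x : J × Fin 3 => T x.1 x.2 + jobTime F p q x.1)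
      (Set.Finite.prod (F ∪ {jn}).finite_toSet (Set.finite_univ)))
    rintro x ⟨j, hj, i, rfl⟩
    exact ⟨(j, i), ⟨hj, Set.mem_univ _⟩, rfl⟩
  have hle : 3 * q jn ≤ T jn i + jobTime F p q jn := by rw [hjtn]; linarith
  calc 3 * q jn ≤ T jn i + jobTime F p q jn := hle
    _ ≤ makespan F {jn} p q T := le_csSup hfin.bddAbove hxmem
end
end

section
/- Suppose F is nonempty and O = {J_n} consists of a single open-shop job with processing time q_n > p_max. Then for every feasible schedule σ there exists a feasible schedule π with makespan(π) ≤ makespan(σ) in which the open-shop job J_n is processed on M3 before it is processed on M1, i.e., C_n^3 ≤ S_n^1 in π. -/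
open Finset

noncomputable section

set_option linter.unusedSectionVars false
set_option maxHeartbeats 1000000


section helpers
variable {J : Type*} [DecidableEq J]
open Classical in
/-- Total length of pairwise disjoint intervals inside `[lo,hi]` is at most `hi - lo`. -/
lemma sum_intervals (s len : J → ℝ) (G : Finset J)
    (hpos : ∀ j ∈ G, 0 < len j)
    (hdisj : ∀ j ∈ G, ∀ k ∈ G, j ≠ k → s j + len j ≤ s k ∨ s k + len k ≤ s j)
    (lo hi : ℝ) (hlohi : lo ≤ hi)
    (hlo : ∀ j ∈ G, lo ≤ s j) (hhi : ∀ j ∈ G, s j + len j ≤ hi) :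
    ∑ j ∈ G, len j ≤ hi - lo := by
  induction G using Finset.strongInduction generalizing hi with
  | _ G ih =>
    rcases G.eq_empty_or_nonempty with rfl | hne
    · simp; linarith
    · obtain ⟨j0, hj0, hmax⟩ := G.exists_max_image s hne
      have h1 : ∀ j ∈ G.erase j0, s j + len j ≤ s j0 := by
        intro j hj
        have hjG := Finset.mem_of_mem_erase hj
        have hne' := Finset.ne_of_mem_erase hj
        rcases hdisj j hjG j0 hj0 hne' with h | h
        · exact h
        · exfalso
          have := hmax j hjG
          have := hpos j0 hj0
          linarith
      have h2 := ih (G.erase j0) (Finset.erase_ssubset hj0)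
        (fun j hj => hpos j (Finset.mem_of_mem_erase hj))
        (fun j hj k hk hne' => hdisj j (Finset.mem_of_mem_erase hj) k (Finset.mem_of_mem_erase hk) hne')
        (s j0) (hlo j0 hj0)
        (fun j hj => hlo j (Finset.mem_of_mem_erase hj)) h1
      have h3 : ∑ j ∈ G.erase j0, len j + len j0 = ∑ j ∈ G, len j :=
        Finset.sum_erase_add _ _ hj0
      have := hhi j0 hj0
      linarith

/-- Strict "lexicographic" order on jobs with key `f`. -/
def lk (f : J → ℝ) (j k : J) : Prop := f j < f k ∨ (f j = f k ∧ WellOrderingRel j k)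

lemma lk_irrefl (f : J → ℝ) (j : J) : ¬ lk f j j := by
  rintro (h | ⟨-, h⟩)
  · exact lt_irrefl _ h
  · exact (irrefl (r := WellOrderingRel) j h : False)

lemma lk_trans (f : J → ℝ) {i j k : J} (h1 : lk f i j) (h2 : lk f j k) : lk f i k := by
  rcases h1 with h1 | ⟨e1, r1⟩ <;> rcases h2 with h2 | ⟨e2, r2⟩
  · exact Or.inl (h1.trans h2)
  · exact Or.inl (e2 ▸ h1)
  · exact Or.inl (e1 ▸ h2)
  · exact Or.inr ⟨e1.trans e2, IsTrans.trans _ _ _ r1 r2⟩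

lemma lk_total (f : J → ℝ) {j k : J} (h : j ≠ k) : lk f j k ∨ lk f k j := by
  rcases lt_trichotomy (f j) (f k) with h' | h' | h'
  · exact Or.inl (Or.inl h')
  · rcases (trichotomous (r := WellOrderingRel) j k : WellOrderingRel j k ∨ j = k ∨ WellOrderingRel k j) with hr | hr | hr
    · exact Or.inl (Or.inr ⟨h', hr⟩)
    · exact absurd hr h
    · exact Or.inr (Or.inr ⟨h'.symm, hr⟩)
  · exact Or.inr (Or.inl h')

lemma lk_ne (f : J → ℝ) {j k : J} (h : lk f j k) : j ≠ k := by
  rintro rfl; exact lk_irrefl f j h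

lemma lk_le (f : J → ℝ) {j k : J} (h : lk f j k) : f j ≤ f k := by
  rcases h with h | ⟨h, -⟩
  · exact h.le
  · exact h.le

open Classical in
/-- low-packing: consecutive slots by `lk f` order are disjoint. -/
lemma pack_disjoint (G : Finset J) (p : J → ℝ) (hp : ∀ j ∈ G, 0 ≤ p j) (f : J → ℝ)
    {j k : J} (hj : j ∈ G) (h : lk f j k) :
    ∑ j' ∈ G.filter (fun j' => lk f j' j), p j' + p j
      ≤ ∑ j' ∈ G.filter (fun j' => lk f j' k), p j' := by
  have hsub : insert j (G.filter (fun j' => lk f j' j)) ⊆ G.filter (fun j' => lk f j' k) := by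
    intro x hx
    rcases Finset.mem_insert.1 hx with rfl | hx
    · exact Finset.mem_filter.2 ⟨hj, h⟩
    · obtain ⟨hxG, hxj⟩ := Finset.mem_filter.1 hx
      exact Finset.mem_filter.2 ⟨hxG, lk_trans f hxj h⟩
  have hnotmem : j ∉ G.filter (fun j' => lk f j' j) := by
    intro hmem
    exact lk_irrefl f j (Finset.mem_filter.1 hmem).2
  calc ∑ j' ∈ G.filter (fun j' => lk f j' j), p j' + p j
      = ∑ j' ∈ insert j (G.filter (fun j' => lk f j' j)), p j' := by
        rw [Finset.sum_insert hnotmem]; ring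
    _ ≤ ∑ j' ∈ G.filter (fun j' => lk f j' k), p j' := by
        apply Finset.sum_le_sum_of_subset_of_nonneg hsub
        intro x hx _
        exact hp x (Finset.mem_filter.1 hx).1

open Classical in
/-- top-packing: consecutive slots by reverse `lk f` order are disjoint. -/
lemma pack_disjoint_top (G : Finset J) (p : J → ℝ) (hp : ∀ j ∈ G, 0 ≤ p j) (f : J → ℝ)
    {j k : J} (hj : j ∈ G) (h : lk f j k) :
    ∑ j' ∈ G.filter (fun j' => ¬ lk f j' k), p j' + p j
      ≤ ∑ j' ∈ G.filter (fun j' => ¬ lk f j' j), p j' := by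
  have hsub : insert j (G.filter (fun j' => ¬ lk f j' k)) ⊆ G.filter (fun j' => ¬ lk f j' j) := by
    intro x hx
    rcases Finset.mem_insert.1 hx with rfl | hx
    · exact Finset.mem_filter.2 ⟨hj, lk_irrefl f _⟩
    · obtain ⟨hxG, hxk⟩ := Finset.mem_filter.1 hx
      exact Finset.mem_filter.2 ⟨hxG, fun hxj => hxk (lk_trans f hxj h)⟩
  have hnotmem : j ∉ G.filter (fun j' => ¬ lk f j' k) := by
    intro hmem
    exact (Finset.mem_filter.1 hmem).2 h
  calc ∑ j' ∈ G.filter (fun j' => ¬ lk f j' k), p j' + p j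
      = ∑ j' ∈ insert j (G.filter (fun j' => ¬ lk f j' k)), p j' := by
        rw [Finset.sum_insert hnotmem]; ring
    _ ≤ _ := by
        apply Finset.sum_le_sum_of_subset_of_nonneg hsub
        intro x hx _
        exact hp x (Finset.mem_filter.1 hx).1

end helpers

section mk
variable {J : Type*} [DecidableEq J] (F O : Finset J) (p q : J → ℝ) (S : J → Fin 3 → ℝ)

lemma le_makespan {j : J} (hj : j ∈ F ∪ O) (i : Fin 3) :
    S j i + jobTime F p q j ≤ makespan F O p q S := by
  classical
  apply le_csSup
  · apply BddAbove.mono (s := {x : ℝ | ∃ j ∈ F ∪ O, ∃ i : Fin 3, x = S j i + jobTime F p q j})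
      (t := ↑(((F ∪ O) ×ˢ (Finset.univ : Finset (Fin 3))).image
        fun z => S z.1 z.2 + jobTime F p q z.1))
    · rintro x ⟨j, hj, i, rfl⟩
      simp only [Finset.coe_image, Set.mem_image, Finset.mem_coe, Finset.mem_product]
      exact ⟨(j, i), ⟨hj, Finset.mem_univ i⟩, rfl⟩
    · exact (((F ∪ O) ×ˢ (Finset.univ : Finset (Fin 3))).image
        fun z => S z.1 z.2 + jobTime F p q z.1).finite_toSet.bddAbove
  · exact ⟨j, hj, i, rfl⟩

lemma makespan_le {j0 : J} (hj0 : j0 ∈ F ∪ O) (B : ℝ)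
    (h : ∀ j ∈ F ∪ O, ∀ i : Fin 3, S j i + jobTime F p q j ≤ B) :
    makespan F O p q S ≤ B := by
  apply csSup_le
  · exact ⟨S j0 0 + jobTime F p q j0, j0, hj0, 0, rfl⟩
  · rintro x ⟨j, hj, i, rfl⟩
    exact h j hj i
end mk

section morehelp
variable {J : Type*} [DecidableEq J]

open Classical in
lemma sum_filter_lk_add_le (G : Finset J) (p : J → ℝ) (hp : ∀ a ∈ G, 0 ≤ p a) (f : J → ℝ)
    {j : J} (hj : j ∈ G) :
    ∑ j' ∈ G.filter (fun j' => lk f j' j), p j' + p j ≤ ∑ j' ∈ G, p j' := by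
  have hnotmem : j ∉ G.filter (fun j' => lk f j' j) := fun hmem =>
    lk_irrefl f j (Finset.mem_filter.1 hmem).2
  calc ∑ j' ∈ G.filter (fun j' => lk f j' j), p j' + p j
      = ∑ j' ∈ insert j (G.filter (fun j' => lk f j' j)), p j' := by
        rw [Finset.sum_insert hnotmem]; ring
    _ ≤ ∑ j' ∈ G, p j' := by
        apply Finset.sum_le_sum_of_subset_of_nonneg
        · intro x hx
          rcases Finset.mem_insert.1 hx with rfl | hx
          · exact hj
          · exact (Finset.mem_filter.1 hx).1
        · intro x hx _; exact hp x hx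

open Classical in
lemma le_sum_filter_not_lk (G : Finset J) (p : J → ℝ) (hp : ∀ a ∈ G, 0 ≤ p a) (f : J → ℝ)
    {j : J} (hj : j ∈ G) :
    p j ≤ ∑ j' ∈ G.filter (fun j' => ¬ lk f j' j), p j' := by
  apply Finset.single_le_sum (f := p)
  · intro x hx; exact hp x (Finset.mem_filter.1 hx).1
  · exact Finset.mem_filter.2 ⟨hj, lk_irrefl f j⟩

lemma le_of_not_lk (f : J → ℝ) {j j' : J} (h : ¬ lk f j' j) : f j ≤ f j' := by
  rcases eq_or_ne j' j with rfl | hne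
  · exact le_rfl
  · rcases lk_total f hne with h' | h'
    · exact absurd h' h
    · exact lk_le f h'

end morehelp


section construct
variable {J : Type*} [DecidableEq J]

open Classical in
lemma construct (F : Finset J) (jn : J) (p q : J → ℝ)
    (hjn : jn ∉ F) (hp : ∀ j ∈ F, 0 < p j) (hq : 0 < q jn)
    (pm : ℝ) (hpm0 : 0 ≤ pm) (hpmq : pm ≤ q jn) (hpmF : ∀ j ∈ F, p j ≤ pm)
    (σ : J → Fin 3 → ℝ) (hσ : Feasible F {jn} p q σ)
    (E : Finset J) (hEsub : E ⊆ F)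
    (hEmem : ∀ j ∈ E, σ j 1 + p j ≤ σ jn 1)
    (hFmem : ∀ j ∈ F, j ∉ E → σ jn 1 + q jn ≤ σ j 1)
    (x y γ : ℝ)
    (hx0 : 0 ≤ x)
    (hxy : x + q jn ≤ y)
    (hxB : x + q jn ≤ σ jn 1 ∨ σ jn 1 + q jn ≤ x)
    (hyB : y + q jn ≤ σ jn 1 ∨ σ jn 1 + q jn ≤ y)
    (hyC : y + q jn ≤ makespan F {jn} p q σ)
    (hxE : x + q jn ≤ σ jn 1 + pm - (∑ j ∈ E, p j) ∨ σ jn 1 + pm ≤ x)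
    (hxF : x + q jn + (∑ j ∈ F \ E, p j) ≤ makespan F {jn} p q σ)
    (hγ1 : (∑ j ∈ E, p j) ≤ γ)
    (hlay : ((∑ j ∈ E, p j) ≤ y ∧ y + q jn ≤ γ) ∨ (γ + (∑ j ∈ F \ E, p j) ≤ y))
    (hγb : γ + pm ≤ σ jn 1 + q jn) :
    ∃ π : J → Fin 3 → ℝ, Feasible F {jn} p q π ∧
      makespan F {jn} p q π ≤ makespan F {jn} p q σ ∧
      π jn 2 + q jn ≤ π jn 0 := by
  classical
  obtain ⟨hσ0, hσ2, hσ3, hσ4⟩ := hσ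
  set b := σ jn 1 with hbdef
  set C := makespan F {jn} p q σ with hCdef
  set w1 := ∑ j ∈ E, p j with hw1def
  set w2 := ∑ j ∈ F \ E, p j with hw2def
  have hmemF : ∀ j ∈ F, j ∈ F ∪ {jn} := fun j hj => Finset.mem_union_left _ hj
  have hmemn : jn ∈ F ∪ {jn} := Finset.mem_union_right _ (Finset.mem_singleton_self jn)
  have htF : ∀ j ∈ F, jobTime F p q j = p j := fun j hj => if_pos hj
  have htn : jobTime F p q jn = q jn := if_neg hjn
  have hneF : ∀ j ∈ F, j ≠ jn := fun j hj h => hjn (h ▸ hj)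
  have hCile : ∀ j ∈ F ∪ {jn}, ∀ i : Fin 3, σ j i + jobTime F p q j ≤ C :=
    fun j hj i => le_makespan F {jn} p q σ hj i
  have hCF : ∀ j ∈ F, ∀ i : Fin 3, σ j i + p j ≤ C := by
    intro j hj i; have := hCile j (hmemF j hj) i; rwa [htF j hj] at this
  have hCn : ∀ i : Fin 3, σ jn i + q jn ≤ C := by
    intro i; have := hCile jn hmemn i; rwa [htn] at this
  have hd1 : ∀ (i : Fin 3), ∀ j ∈ F, ∀ k ∈ F, j ≠ k →
      σ j i + p j ≤ σ k i ∨ σ k i + p k ≤ σ j i := by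
    intro i j hj k hk hne
    have := hσ2 i j (hmemF j hj) k (hmemF k hk) hne
    rwa [htF j hj, htF k hk] at this
  have hb0 : (0:ℝ) ≤ b := hσ0 jn hmemn 1
  have hbC : b + q jn ≤ C := hCn 1
  have hpnn : ∀ j ∈ F, 0 ≤ p j := fun j hj => (hp j hj).le
  have hEF' : ∀ j ∈ F \ E, j ∈ F := fun j hj => (Finset.mem_sdiff.1 hj).1
  have hF'mem : ∀ j ∈ F \ E, b + q jn ≤ σ j 1 := by
    intro j hj; obtain ⟨h1, h2⟩ := Finset.mem_sdiff.1 hj; exact hFmem j h1 h2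
  have hw10 : (0:ℝ) ≤ w1 := Finset.sum_nonneg (fun j hj => hpnn j (hEsub hj))
  have hw20 : (0:ℝ) ≤ w2 := Finset.sum_nonneg (fun j hj => hpnn j (hEF' j hj))
  have hw1b : w1 ≤ b := by
    have := sum_intervals (fun a => σ a 1) p E
      (fun j hj => hp j (hEsub hj))
      (fun j hj k hk hne => hd1 1 j (hEsub hj) k (hEsub hk) hne)
      0 b hb0 (fun j hj => hσ0 j (hmemF j (hEsub hj)) 1)
      (fun j hj => hEmem j hj)
    linarith
  have hF5 : b + q jn + w2 ≤ C := by
    have := sum_intervals (fun a => σ a 1) p (F \ E)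
      (fun j hj => hp j (hEF' j hj))
      (fun j hj k hk hne => hd1 1 j (hEF' j hj) k (hEF' k hk) hne)
      (b + q jn) C hbC hF'mem
      (fun j hj => hCF j (hEF' j hj) 1)
    linarith
  set g2 : J → ℝ := fun a => σ a 1 with hg2def
  set g3 : J → ℝ := fun a => σ a 1 + p a with hg3def
  set s1 : J → ℝ := fun j =>
    if j ∈ E then ∑ j' ∈ E.filter (fun j' => lk g2 j' j), p j'
    else γ + ∑ j' ∈ (F \ E).filter (fun j' => lk g2 j' j), p j' with hs1def
  set s3 : J → ℝ := fun j =>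
    if j ∈ E then (b + pm - w1) + ∑ j' ∈ E.filter (fun j' => lk g3 j' j), p j'
    else C - ∑ j' ∈ (F \ E).filter (fun j' => ¬ lk g3 j' j), p j' with hs3def
  have hs1E : ∀ j ∈ E, s1 j = ∑ j' ∈ E.filter (fun j' => lk g2 j' j), p j' := by
    intro j hj; simp only [hs1def, if_pos hj]
  have hs1F : ∀ j ∈ F \ E, s1 j = γ + ∑ j' ∈ (F \ E).filter (fun j' => lk g2 j' j), p j' := by
    intro j hj; simp only [hs1def, if_neg (Finset.mem_sdiff.1 hj).2]
  have hs3E : ∀ j ∈ E, s3 j = (b + pm - w1) + ∑ j' ∈ E.filter (fun j' => lk g3 j' j), p j' := by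
    intro j hj; simp only [hs3def, if_pos hj]
  have hs3F : ∀ j ∈ F \ E, s3 j = C - ∑ j' ∈ (F \ E).filter (fun j' => ¬ lk g3 j' j), p j' := by
    intro j hj; simp only [hs3def, if_neg (Finset.mem_sdiff.1 hj).2]
  -- range facts
  have hE1r : ∀ j ∈ E, 0 ≤ s1 j ∧ s1 j + p j ≤ w1 := by
    intro j hj
    rw [hs1E j hj]
    constructor
    · exact Finset.sum_nonneg (fun a ha => hpnn a (hEsub (Finset.mem_filter.1 ha).1))
    · exact sum_filter_lk_add_le E p (fun a ha => hpnn a (hEsub ha)) g2 hj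
  have hf1r : ∀ j ∈ F \ E, γ ≤ s1 j ∧ s1 j + p j ≤ γ + w2 := by
    intro j hj
    rw [hs1F j hj]
    constructor
    · have : (0:ℝ) ≤ ∑ j' ∈ (F \ E).filter (fun j' => lk g2 j' j), p j' :=
        Finset.sum_nonneg (fun a ha => hpnn a (hEF' a (Finset.mem_filter.1 ha).1))
      linarith
    · have := sum_filter_lk_add_le (F \ E) p (fun a ha => hpnn a (hEF' a ha)) g2 hj
      linarith
  have hE3r : ∀ j ∈ E, b + pm - w1 ≤ s3 j ∧ s3 j + p j ≤ b + pm := by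
    intro j hj
    rw [hs3E j hj]
    constructor
    · have : (0:ℝ) ≤ ∑ j' ∈ E.filter (fun j' => lk g3 j' j), p j' :=
        Finset.sum_nonneg (fun a ha => hpnn a (hEsub (Finset.mem_filter.1 ha).1))
      linarith
    · have := sum_filter_lk_add_le E p (fun a ha => hpnn a (hEsub ha)) g3 hj
      linarith
  have hf3r : ∀ j ∈ F \ E, C - w2 ≤ s3 j ∧ s3 j + p j ≤ C := by
    intro j hj
    rw [hs3F j hj]
    constructor
    · have : ∑ j' ∈ (F \ E).filter (fun j' => ¬ lk g3 j' j), p j' ≤ w2 := by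
        apply Finset.sum_le_sum_of_subset_of_nonneg (Finset.filter_subset _ _)
        intro a ha _; exact hpnn a (hEF' a ha)
      linarith
    · have := le_sum_filter_not_lk (F \ E) p (fun a ha => hpnn a (hEF' a ha)) g3 hj
      linarith
  -- deadlines and releases
  have dE : ∀ j ∈ E, s1 j + p j ≤ σ j 1 := by
    intro j hj
    rw [hs1E j hj]
    have hkey := sum_intervals (fun a => σ a 0) p
      (insert j (E.filter (fun j' => lk g2 j' j)))
      (fun a ha => by
        rcases Finset.mem_insert.1 ha with rfl | ha
        · exact hp a (hEsub hj)
        · exact hp a (hEsub (Finset.mem_filter.1 ha).1))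
      (fun a ha a' ha' hne => by
        have haF : a ∈ F := by
          rcases Finset.mem_insert.1 ha with rfl | ha
          · exact hEsub hj
          · exact hEsub (Finset.mem_filter.1 ha).1
        have haF' : a' ∈ F := by
          rcases Finset.mem_insert.1 ha' with rfl | ha'
          · exact hEsub hj
          · exact hEsub (Finset.mem_filter.1 ha').1
        exact hd1 0 a haF a' haF' hne)
      0 (σ j 1) (hσ0 j (hmemF j (hEsub hj)) 1)
      (fun a ha => by
        have haF : a ∈ F := by
          rcases Finset.mem_insert.1 ha with rfl | ha
          · exact hEsub hj
          · exact hEsub (Finset.mem_filter.1 ha).1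
        exact hσ0 a (hmemF a haF) 0)
      (fun a ha => by
        rcases Finset.mem_insert.1 ha with rfl | ha
        · exact (hσ4 a (hEsub hj)).1
        · obtain ⟨haE, hlk⟩ := Finset.mem_filter.1 ha
          have h1 := (hσ4 a (hEsub haE)).1
          have h2 : g2 a ≤ g2 j := lk_le g2 hlk
          simp only [hg2def] at h2
          linarith)
    have hnotmem : j ∉ E.filter (fun j' => lk g2 j' j) := fun hmem =>
      lk_irrefl g2 j (Finset.mem_filter.1 hmem).2
    rw [Finset.sum_insert hnotmem] at hkey
    linarith
  have dF : ∀ j ∈ F \ E, s1 j + p j ≤ σ j 1 := by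
    intro j hj
    rw [hs1F j hj]
    have hkey := sum_intervals (fun a => σ a 1) p
      ((F \ E).filter (fun j' => lk g2 j' j))
      (fun a ha => hp a (hEF' a (Finset.mem_filter.1 ha).1))
      (fun a ha a' ha' hne => hd1 1 a (hEF' a (Finset.mem_filter.1 ha).1)
        a' (hEF' a' (Finset.mem_filter.1 ha').1) hne)
      (b + q jn) (σ j 1) (hF'mem j hj)
      (fun a ha => hF'mem a (Finset.mem_filter.1 ha).1)
      (fun a ha => by
        obtain ⟨haM, hlk⟩ := Finset.mem_filter.1 ha
        have hane : a ≠ j := lk_ne g2 hlk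
        rcases hd1 1 a (hEF' a haM) j (hEF' j hj) hane with h | h
        · exact h
        · exfalso
          have h2 : g2 a ≤ g2 j := lk_le g2 hlk
          have h3 := hp j (hEF' j hj)
          simp only [hg2def] at h2
          linarith)
    have h4 := hpmF j (hEF' j hj)
    linarith
  have rE : ∀ j ∈ E, σ j 1 + p j ≤ s3 j := by
    intro j hj
    rw [hs3E j hj]
    have hsplit : ∑ j' ∈ E.filter (fun j' => lk g3 j' j), p j'
        + ∑ j' ∈ E.filter (fun j' => ¬ lk g3 j' j), p j' = w1 := by
      rw [hw1def]; exact Finset.sum_filter_add_sum_filter_not E _ p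
    have hkey := sum_intervals (fun a => σ a 1) p
      (E.filter (fun j' => ¬ lk g3 j' j))
      (fun a ha => hp a (hEsub (Finset.mem_filter.1 ha).1))
      (fun a ha a' ha' hne => hd1 1 a (hEsub (Finset.mem_filter.1 ha).1)
        a' (hEsub (Finset.mem_filter.1 ha').1) hne)
      (σ j 1 + p j - pm) b
      (by have := hEmem j hj; linarith)
      (fun a ha => by
        obtain ⟨haE, hnlk⟩ := Finset.mem_filter.1 ha
        have h1 : g3 j ≤ g3 a := le_of_not_lk g3 hnlk
        have h2 := hpmF a (hEsub haE)
        simp only [hg3def] at h1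
        linarith)
      (fun a ha => hEmem a (Finset.mem_filter.1 ha).1)
    linarith
  have rF : ∀ j ∈ F \ E, σ j 1 + p j ≤ s3 j := by
    intro j hj
    rw [hs3F j hj]
    have hkey := sum_intervals (fun a => σ a 2) p
      ((F \ E).filter (fun j' => ¬ lk g3 j' j))
      (fun a ha => hp a (hEF' a (Finset.mem_filter.1 ha).1))
      (fun a ha a' ha' hne => hd1 2 a (hEF' a (Finset.mem_filter.1 ha).1)
        a' (hEF' a' (Finset.mem_filter.1 ha').1) hne)
      (σ j 1 + p j) C
      (by
        have h1 := (hσ4 j (hEF' j hj)).2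
        have h2 := hCF j (hEF' j hj) 2
        have h3 := hp j (hEF' j hj)
        linarith)
      (fun a ha => by
        obtain ⟨haM, hnlk⟩ := Finset.mem_filter.1 ha
        have h1 : g3 j ≤ g3 a := le_of_not_lk g3 hnlk
        have h2 := (hσ4 a (hEF' a haM)).2
        simp only [hg3def] at h1
        linarith)
      (fun a ha => hCF a (hEF' a (Finset.mem_filter.1 ha).1) 2)
    linarith
  -- machine 1 pairwise disjointness among flow jobs
  have hM1d : ∀ j ∈ F, ∀ k ∈ F, j ≠ k → s1 j + p j ≤ s1 k ∨ s1 k + p k ≤ s1 j := by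
    intro j hj k hk hne
    by_cases hjE : j ∈ E <;> by_cases hkE : k ∈ E
    · rcases lk_total g2 hne with h | h
      · left
        rw [hs1E j hjE, hs1E k hkE]
        exact pack_disjoint E p (fun a ha => hpnn a (hEsub ha)) g2 hjE h
      · right
        rw [hs1E j hjE, hs1E k hkE]
        exact pack_disjoint E p (fun a ha => hpnn a (hEsub ha)) g2 hkE h
    · left
      have h1 := (hE1r j hjE).2
      have h2 := (hf1r k (Finset.mem_sdiff.2 ⟨hk, hkE⟩)).1
      linarith
    · right
      have h1 := (hE1r k hkE).2
      have h2 := (hf1r j (Finset.mem_sdiff.2 ⟨hj, hjE⟩)).1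
      linarith
    · have hjM : j ∈ F \ E := Finset.mem_sdiff.2 ⟨hj, hjE⟩
      have hkM : k ∈ F \ E := Finset.mem_sdiff.2 ⟨hk, hkE⟩
      rcases lk_total g2 hne with h | h
      · left
        rw [hs1F j hjM, hs1F k hkM]
        have := pack_disjoint (F \ E) p (fun a ha => hpnn a (hEF' a ha)) g2 hjM h
        linarith
      · right
        rw [hs1F j hjM, hs1F k hkM]
        have := pack_disjoint (F \ E) p (fun a ha => hpnn a (hEF' a ha)) g2 hkM h
        linarith
  -- machine 3 pairwise disjointness among flow jobs
  have hsep3 : b + pm ≤ C - w2 := by linarith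
  have hM3d : ∀ j ∈ F, ∀ k ∈ F, j ≠ k → s3 j + p j ≤ s3 k ∨ s3 k + p k ≤ s3 j := by
    intro j hj k hk hne
    by_cases hjE : j ∈ E <;> by_cases hkE : k ∈ E
    · rcases lk_total g3 hne with h | h
      · left
        rw [hs3E j hjE, hs3E k hkE]
        have := pack_disjoint E p (fun a ha => hpnn a (hEsub ha)) g3 hjE h
        linarith
      · right
        rw [hs3E j hjE, hs3E k hkE]
        have := pack_disjoint E p (fun a ha => hpnn a (hEsub ha)) g3 hkE h
        linarith
    · left
      have h1 := (hE3r j hjE).2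
      have h2 := (hf3r k (Finset.mem_sdiff.2 ⟨hk, hkE⟩)).1
      linarith
    · right
      have h1 := (hE3r k hkE).2
      have h2 := (hf3r j (Finset.mem_sdiff.2 ⟨hj, hjE⟩)).1
      linarith
    · have hjM : j ∈ F \ E := Finset.mem_sdiff.2 ⟨hj, hjE⟩
      have hkM : k ∈ F \ E := Finset.mem_sdiff.2 ⟨hk, hkE⟩
      rcases lk_total g3 hne with h | h
      · left
        rw [hs3F j hjM, hs3F k hkM]
        have := pack_disjoint_top (F \ E) p (fun a ha => hpnn a (hEF' a ha)) g3 hjM h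
        linarith
      · right
        rw [hs3F j hjM, hs3F k hkM]
        have := pack_disjoint_top (F \ E) p (fun a ha => hpnn a (hEF' a ha)) g3 hkM h
        linarith
  -- jn versus flow jobs on machines 1 and 3
  have hw1y : w1 ≤ y := by
    rcases hlay with ⟨h1, _⟩ | h
    · exact h1
    · linarith
  have hM1n : ∀ j ∈ F, s1 j + p j ≤ y ∨ y + q jn ≤ s1 j := by
    intro j hj
    by_cases hjE : j ∈ E
    · left
      have := (hE1r j hjE).2
      linarith
    · have hjM : j ∈ F \ E := Finset.mem_sdiff.2 ⟨hj, hjE⟩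
      rcases hlay with ⟨h1, h2⟩ | h
      · right
        have := (hf1r j hjM).1
        linarith
      · left
        have := (hf1r j hjM).2
        linarith
  have hM3n : ∀ j ∈ F, s3 j + p j ≤ x ∨ x + q jn ≤ s3 j := by
    intro j hj
    by_cases hjE : j ∈ E
    · rcases hxE with h | h
      · right
        have := (hE3r j hjE).1
        linarith
      · left
        have := (hE3r j hjE).2
        linarith
    · right
      have hjM : j ∈ F \ E := Finset.mem_sdiff.2 ⟨hj, hjE⟩
      have := (hf3r j hjM).1
      linarith
  -- chain facts for flow jobs
  have hchain1 : ∀ j ∈ F, s1 j + p j ≤ σ j 1 := by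
    intro j hj
    by_cases hjE : j ∈ E
    · exact dE j hjE
    · exact dF j (Finset.mem_sdiff.2 ⟨hj, hjE⟩)
  have hchain2 : ∀ j ∈ F, σ j 1 + p j ≤ s3 j := by
    intro j hj
    by_cases hjE : j ∈ E
    · exact rE j hjE
    · exact rF j (Finset.mem_sdiff.2 ⟨hj, hjE⟩)
  -- nonnegativity and completion bounds
  have hs1nn : ∀ j ∈ F, 0 ≤ s1 j := by
    intro j hj
    by_cases hjE : j ∈ E
    · exact (hE1r j hjE).1
    · have := (hf1r j (Finset.mem_sdiff.2 ⟨hj, hjE⟩)).1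
      linarith
  have hs3nn : ∀ j ∈ F, 0 ≤ s3 j := by
    intro j hj
    by_cases hjE : j ∈ E
    · have := (hE3r j hjE).1
      linarith
    · have := (hf3r j (Finset.mem_sdiff.2 ⟨hj, hjE⟩)).1
      linarith
  have hs1C : ∀ j ∈ F, s1 j + p j ≤ C := by
    intro j hj
    have h1 := hchain1 j hj
    have h2 := hCF j hj 1
    have h3 := hp j hj
    linarith
  have hs3C : ∀ j ∈ F, s3 j + p j ≤ C := by
    intro j hj
    by_cases hjE : j ∈ E
    · have := (hE3r j hjE).2
      linarith
    · exact (hf3r j (Finset.mem_sdiff.2 ⟨hj, hjE⟩)).2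
  have hxC : x + q jn ≤ C := by linarith
  have hy0 : 0 ≤ y := by linarith
  -- the new schedule
  set π : J → Fin 3 → ℝ := fun j i =>
    if j = jn then (if i = 0 then y else if i = 1 then b else x)
    else if j ∈ F then (if i = 0 then s1 j else if i = 1 then σ j 1 else s3 j)
    else σ j i with hπdef
  have hπn0 : π jn 0 = y := by simp [hπdef]
  have hπn1 : π jn 1 = b := by simp [hπdef]
  have hπn2 : π jn 2 = x := by simp [hπdef]
  have hπf0 : ∀ j ∈ F, π j 0 = s1 j := by
    intro j hj; simp [hπdef, hneF j hj, hj]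
  have hπf1 : ∀ j ∈ F, π j 1 = σ j 1 := by
    intro j hj; simp [hπdef, hneF j hj, hj]
  have hπf2 : ∀ j ∈ F, π j 2 = s3 j := by
    intro j hj; simp [hπdef, hneF j hj, hj]
  refine ⟨π, ⟨?_, ?_, ?_, ?_⟩, ?_, ?_⟩
  · -- nonnegativity
    intro j hj i
    rcases Finset.mem_union.1 hj with hjF | hjn'
    · fin_cases i <;> simp only [Fin.zero_eta, Fin.mk_one, Fin.reduceFinMk]
      · rw [hπf0 j hjF]; exact hs1nn j hjF
      · rw [hπf1 j hjF]; exact hσ0 j (hmemF j hjF) 1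
      · rw [hπf2 j hjF]; exact hs3nn j hjF
    · have hj' : j = jn := Finset.mem_singleton.1 hjn'
      subst hj'
      fin_cases i <;> simp only [Fin.zero_eta, Fin.mk_one, Fin.reduceFinMk]
      · rw [hπn0]; linarith
      · rw [hπn1]; exact hb0
      · rw [hπn2]; exact hx0
  · -- machine disjointness
    intro i j hj k hk hjk
    rcases Finset.mem_union.1 hj with hjF | hjn' <;>
      rcases Finset.mem_union.1 hk with hkF | hkn'
    · rw [htF j hjF, htF k hkF]
      fin_cases i <;> simp only [Fin.zero_eta, Fin.mk_one, Fin.reduceFinMk]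
      · rw [hπf0 j hjF, hπf0 k hkF]; exact hM1d j hjF k hkF hjk
      · rw [hπf1 j hjF, hπf1 k hkF]; exact hd1 1 j hjF k hkF hjk
      · rw [hπf2 j hjF, hπf2 k hkF]; exact hM3d j hjF k hkF hjk
    · have hk' : k = jn := Finset.mem_singleton.1 hkn'
      rw [hk'] at hjk ⊢
      rw [htF j hjF, htn]
      fin_cases i <;> simp only [Fin.zero_eta, Fin.mk_one, Fin.reduceFinMk]
      · rw [hπf0 j hjF, hπn0]; exact hM1n j hjF
      · rw [hπf1 j hjF, hπn1]
        have := hσ2 1 j (hmemF j hjF) jn hmemn hjk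
        rwa [htF j hjF, htn] at this
      · rw [hπf2 j hjF, hπn2]; exact hM3n j hjF
    · have hj' : j = jn := Finset.mem_singleton.1 hjn'
      rw [hj'] at hjk ⊢
      rw [htn, htF k hkF]
      fin_cases i <;> simp only [Fin.zero_eta, Fin.mk_one, Fin.reduceFinMk]
      · rw [hπf0 k hkF, hπn0]; exact (hM1n k hkF).symm
      · rw [hπf1 k hkF, hπn1]
        have := hσ2 1 jn hmemn k (hmemF k hkF) hjk
        rwa [htn, htF k hkF] at this
      · rw [hπf2 k hkF, hπn2]; exact (hM3n k hkF).symm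
    · exfalso
      have hj' : j = jn := Finset.mem_singleton.1 hjn'
      have hk' : k = jn := Finset.mem_singleton.1 hkn'
      exact hjk (hj'.trans hk'.symm)
  · -- per-job disjointness across machines
    intro j hj i i' hii'
    rcases Finset.mem_union.1 hj with hjF | hjn'
    · rw [htF j hjF]
      have c1 := hchain1 j hjF
      have c2 := hchain2 j hjF
      have hpj := hp j hjF
      fin_cases i <;> fin_cases i' <;> simp only [Fin.zero_eta, Fin.mk_one, Fin.reduceFinMk]
      · exact absurd rfl hii'
      · rw [hπf0 j hjF, hπf1 j hjF]; left; exact c1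
      · rw [hπf0 j hjF, hπf2 j hjF]; left; linarith
      · rw [hπf1 j hjF, hπf0 j hjF]; right; exact c1
      · exact absurd rfl hii'
      · rw [hπf1 j hjF, hπf2 j hjF]; left; exact c2
      · rw [hπf2 j hjF, hπf0 j hjF]; right; linarith
      · rw [hπf2 j hjF, hπf1 j hjF]; right; exact c2
      · exact absurd rfl hii'
    · have hj' : j = jn := Finset.mem_singleton.1 hjn'
      subst hj'
      rw [htn]
      fin_cases i <;> fin_cases i' <;> simp only [Fin.zero_eta, Fin.mk_one, Fin.reduceFinMk]
      · exact absurd rfl hii'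
      · rw [hπn0, hπn1]; exact hyB
      · rw [hπn0, hπn2]; right; exact hxy
      · rw [hπn1, hπn0]; exact hyB.symm
      · exact absurd rfl hii'
      · rw [hπn1, hπn2]; exact hxB.symm
      · rw [hπn2, hπn0]; left; exact hxy
      · rw [hπn2, hπn1]; exact hxB
      · exact absurd rfl hii'
  · -- flow order
    intro j hj
    rw [hπf0 j hj, hπf1 j hj, hπf2 j hj]
    exact ⟨hchain1 j hj, hchain2 j hj⟩
  · -- makespan bound
    apply makespan_le F {jn} p q π hmemn
    intro j hj i
    rcases Finset.mem_union.1 hj with hjF | hjn'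
    · rw [htF j hjF]
      fin_cases i <;> simp only [Fin.zero_eta, Fin.mk_one, Fin.reduceFinMk]
      · rw [hπf0 j hjF]; exact hs1C j hjF
      · rw [hπf1 j hjF]; exact hCF j hjF 1
      · rw [hπf2 j hjF]; exact hs3C j hjF
    · have hj' : j = jn := Finset.mem_singleton.1 hjn'
      subst hj'
      rw [htn]
      fin_cases i <;> simp only [Fin.zero_eta, Fin.mk_one, Fin.reduceFinMk]
      · rw [hπn0]; exact hyC
      · rw [hπn1]; exact hbC
      · rw [hπn2]; exact hxC
  · -- conclusion
    rw [hπn0, hπn2]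
    exact hxy

end construct

/-- Lemma 6.2: if `O = {jn}` with `q_n > p_max`, then from any feasible schedule `σ`
one obtains a feasible schedule `π` of no larger makespan in which `jn` is processed on
`M3` before it is processed on `M1` (machines `M1, M2, M3` are `0, 1, 2`). -/
theorem stmt15 {J : Type*} [DecidableEq J] (F : Finset J) (jn : J) (p q : J → ℝ)
    (hdisj : Disjoint F {jn})
    (hp : ∀ j ∈ F, 0 < p j) (hq : 0 < q jn)
    (hF : F.Nonempty)
    (hpq : F.sup' hF p < q jn)
    (σ : J → Fin 3 → ℝ) (hσ : Feasible F {jn} p q σ) :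
    ∃ π : J → Fin 3 → ℝ, Feasible F {jn} p q π ∧
      makespan F {jn} p q π ≤ makespan F {jn} p q σ ∧
      π jn 2 + q jn ≤ π jn 0 := by
  classical
  have hjn : jn ∉ F := fun hmem =>
    Finset.disjoint_left.1 hdisj hmem (Finset.mem_singleton_self jn)
  by_cases hgood : σ jn 2 + q jn ≤ σ jn 0
  · exact ⟨σ, hσ, le_refl _, hgood⟩
  set pm := F.sup' hF p with hpmdef
  have hpmF : ∀ j ∈ F, p j ≤ pm := fun j hj => Finset.le_sup' p hj
  have hpm0 : 0 ≤ pm := by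
    obtain ⟨j0, hj0⟩ := hF
    have := hp j0 hj0
    have := hpmF j0 hj0
    linarith
  have hpmq : pm ≤ q jn := hpq.le
  obtain ⟨hσ0, hσ2, hσ3, hσ4⟩ := hσ
  have hσfull : Feasible F {jn} p q σ := ⟨hσ0, hσ2, hσ3, hσ4⟩
  set b := σ jn 1 with hbdef
  set a := σ jn 0 with hadef
  set c := σ jn 2 with hcdef
  set C := makespan F {jn} p q σ with hCdef
  have hmemF : ∀ j ∈ F, j ∈ F ∪ {jn} := fun j hj => Finset.mem_union_left _ hj
  have hmemn : jn ∈ F ∪ {jn} := Finset.mem_union_right _ (Finset.mem_singleton_self jn)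
  have htF : ∀ j ∈ F, jobTime F p q j = p j := fun j hj => if_pos hj
  have htn : jobTime F p q jn = q jn := if_neg hjn
  have hneF : ∀ j ∈ F, j ≠ jn := fun j hj h => hjn (h ▸ hj)
  have hCile : ∀ j ∈ F ∪ {jn}, ∀ i : Fin 3, σ j i + jobTime F p q j ≤ C :=
    fun j hj i => le_makespan F {jn} p q σ hj i
  have hCF : ∀ j ∈ F, ∀ i : Fin 3, σ j i + p j ≤ C := by
    intro j hj i; have := hCile j (hmemF j hj) i; rwa [htF j hj] at this
  have hCn : ∀ i : Fin 3, σ jn i + q jn ≤ C := by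
    intro i; have := hCile jn hmemn i; rwa [htn] at this
  have hd1 : ∀ (i : Fin 3), ∀ j ∈ F, ∀ k ∈ F, j ≠ k →
      σ j i + p j ≤ σ k i ∨ σ k i + p k ≤ σ j i := by
    intro i j hj k hk hne
    have := hσ2 i j (hmemF j hj) k (hmemF k hk) hne
    rwa [htF j hj, htF k hk] at this
  have hb0 : (0:ℝ) ≤ b := hσ0 jn hmemn 1
  have ha0 : (0:ℝ) ≤ a := hσ0 jn hmemn 0
  have hc0 : (0:ℝ) ≤ c := hσ0 jn hmemn 2
  have hbC : b + q jn ≤ C := hCn 1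
  have hcC : c + q jn ≤ C := hCn 2
  have hpnn : ∀ j ∈ F, 0 ≤ p j := fun j hj => (hp j hj).le
  -- bad order : a + q ≤ c
  have hbad : a + q jn ≤ c := by
    have h20 : (2 : Fin 3) ≠ (0 : Fin 3) := by decide
    have := hσ3 jn hmemn 2 0 h20
    rw [htn] at this
    rcases this with h | h
    · exact absurd h hgood
    · exact h
  -- the split of the flow jobs
  set E := F.filter (fun j => σ j 1 + p j ≤ b) with hEdef
  have hEsub : E ⊆ F := Finset.filter_subset _ _
  have hEmem : ∀ j ∈ E, σ j 1 + p j ≤ b := fun j hj => (Finset.mem_filter.1 hj).2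
  have hFmem : ∀ j ∈ F, j ∉ E → b + q jn ≤ σ j 1 := by
    intro j hj hnE
    have hnot : ¬ (σ j 1 + p j ≤ b) := fun h => hnE (Finset.mem_filter.2 ⟨hj, h⟩)
    have h1 := hσ2 1 j (hmemF j hj) jn hmemn (hneF j hj)
    rw [htF j hj, htn] at h1
    rcases h1 with h | h
    · exact absurd h hnot
    · exact h
  have hEF' : ∀ j ∈ F \ E, j ∈ F := fun j hj => (Finset.mem_sdiff.1 hj).1
  have hF'mem : ∀ j ∈ F \ E, b + q jn ≤ σ j 1 := by
    intro j hj; obtain ⟨h1, h2⟩ := Finset.mem_sdiff.1 hj; exact hFmem j h1 h2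
  set w1 := ∑ j ∈ E, p j with hw1def
  set w2 := ∑ j ∈ F \ E, p j with hw2def
  have hw10 : (0:ℝ) ≤ w1 := Finset.sum_nonneg (fun j hj => hpnn j (hEsub hj))
  have hw20 : (0:ℝ) ≤ w2 := Finset.sum_nonneg (fun j hj => hpnn j (hEF' j hj))
  have hw1b : w1 ≤ b := by
    have := sum_intervals (fun x => σ x 1) p E
      (fun j hj => hp j (hEsub hj))
      (fun j hj k hk hne => hd1 1 j (hEsub hj) k (hEsub hk) hne)
      0 b hb0 (fun j hj => hσ0 j (hmemF j (hEsub hj)) 1)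
      (fun j hj => hEmem j hj)
    linarith
  have hF5 : b + q jn + w2 ≤ C := by
    have := sum_intervals (fun x => σ x 1) p (F \ E)
      (fun j hj => hp j (hEF' j hj))
      (fun j hj k hk hne => hd1 1 j (hEF' j hj) k (hEF' k hk) hne)
      (b + q jn) C hbC hF'mem
      (fun j hj => hCF j (hEF' j hj) 1)
    linarith
  have hsumsplit : w2 + w1 = ∑ j ∈ F, p j := Finset.sum_sdiff hEsub
  have hjtpos : ∀ j ∈ insert jn F, 0 < jobTime F p q j := by
    intro j hj
    rcases Finset.mem_insert.1 hj with rfl | hj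
    · rw [htn]; exact hq
    · rw [htF j hj]; exact hp j hj
  have hinsF : ∀ j ∈ insert jn F, j ∈ F ∪ {jn} := by
    intro j hj
    rcases Finset.mem_insert.1 hj with rfl | hj
    · exact hmemn
    · exact hmemF j hj
  have hPC : w1 + w2 + q jn ≤ C := by
    have hkey := sum_intervals (fun x => σ x 0) (jobTime F p q) (insert jn F)
      (fun j hj => hjtpos j hj)
      (fun j hj k hk hne => hσ2 0 j (hinsF j hj) k (hinsF k hk) hne)
      0 C (le_trans (by linarith) hbC)
      (fun j hj => hσ0 j (hinsF j hj) 0)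
      (fun j hj => hCile j (hinsF j hj) 0)
    rw [Finset.sum_insert hjn, htn] at hkey
    have hcongr : ∑ j ∈ F, jobTime F p q j = ∑ j ∈ F, p j :=
      Finset.sum_congr rfl (fun j hj => htF j hj)
    rw [hcongr] at hkey
    linarith [hsumsplit]
  -- case analysis on the position of jn's M2 and M3 operations
  have h12 : (1 : Fin 3) ≠ (2 : Fin 3) := by decide
  have hbc := hσ3 jn hmemn 1 2 h12
  rw [htn] at hbc
  rcases hbc with hbc | hcb
  · -- Case A : b + q ≤ c
    have hF6 : b + q jn + (q jn + w2) ≤ C := by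
      have hins : ∀ j ∈ insert jn (F \ E), j ∈ F ∪ {jn} := by
        intro j hj
        rcases Finset.mem_insert.1 hj with rfl | hj
        · exact hmemn
        · exact hmemF j (hEF' j hj)
      have hnotin : jn ∉ F \ E := fun h => hjn (hEF' jn h)
      have hkey := sum_intervals (fun x => σ x 2) (jobTime F p q) (insert jn (F \ E))
        (fun j hj => by
          rcases Finset.mem_insert.1 hj with rfl | hj
          · rw [htn]; exact hq
          · rw [htF j (hEF' j hj)]; exact hp j (hEF' j hj))
        (fun j hj k hk hne => hσ2 2 j (hins j hj) k (hins k hk) hne)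
        (b + q jn) C hbC
        (fun j hj => by
          rcases Finset.mem_insert.1 hj with rfl | hj
          · exact hbc
          · have h1 := (hσ4 j (hEF' j hj)).2
            have h2 := hF'mem j hj
            have h3 := hp j (hEF' j hj)
            linarith)
        (fun j hj => hCile j (hins j hj) 2)
      rw [Finset.sum_insert hnotin, htn] at hkey
      have hcongr : ∑ j ∈ F \ E, jobTime F p q j = ∑ j ∈ F \ E, p j :=
        Finset.sum_congr rfl (fun j hj => htF j (hEF' j hj))
      rw [hcongr] at hkey
      linarith
    have h01 : (0 : Fin 3) ≠ (1 : Fin 3) := by decide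
    have hab := hσ3 jn hmemn 0 1 h01
    rw [htn] at hab
    rcases hab with hab | hba
    · -- Subcase A1 : a + q ≤ b ; jn M3 at [0,q], jn M1 at [C-q,C]
      have hw1qb : w1 + q jn ≤ b := by
        have hnotin : jn ∉ E := fun h => hjn (hEsub h)
        have hins : ∀ j ∈ insert jn E, j ∈ F ∪ {jn} := by
          intro j hj
          rcases Finset.mem_insert.1 hj with rfl | hj
          · exact hmemn
          · exact hmemF j (hEsub hj)
        have hkey := sum_intervals (fun x => σ x 0) (jobTime F p q) (insert jn E)
          (fun j hj => by
            rcases Finset.mem_insert.1 hj with rfl | hj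
            · rw [htn]; exact hq
            · rw [htF j (hEsub hj)]; exact hp j (hEsub hj))
          (fun j hj k hk hne => hσ2 0 j (hins j hj) k (hins k hk) hne)
          0 b hb0
          (fun j hj => hσ0 j (hins j hj) 0)
          (fun j hj => by
            rcases Finset.mem_insert.1 hj with rfl | hj
            · rw [htn]; exact hab
            · rw [htF j (hEsub hj)]
              have h1 := (hσ4 j (hEsub hj)).1
              have h2 := hEmem j hj
              have h3 := hp j (hEsub hj)
              linarith)
        rw [Finset.sum_insert hnotin, htn] at hkey
        have hcongr : ∑ j ∈ E, jobTime F p q j = ∑ j ∈ E, p j :=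
          Finset.sum_congr rfl (fun j hj => htF j (hEsub hj))
        rw [hcongr] at hkey
        linarith
      apply construct F jn p q hjn hp hq pm hpm0 hpmq hpmF σ hσfull E hEsub hEmem hFmem
        0 (C - q jn) w1
      · linarith
      · linarith
      · left; linarith
      · right; linarith
      · linarith
      · left; linarith
      · linarith
      · exact le_refl _
      · right; linarith
      · linarith
    · -- Subcase A2 : b + q ≤ a ; jn M3 at [b+q,b+2q], jn M1 at [C-q,C]
      have hca : b + 2 * q jn ≤ c := by linarith
      have hC3 : b + 3 * q jn ≤ C := by linarith
      apply construct F jn p q hjn hp hq pm hpm0 hpmq hpmF σ hσfull E hEsub hEmem hFmem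
        (b + q jn) (C - q jn) w1
      · linarith
      · linarith
      · right; linarith
      · right; linarith
      · linarith
      · right; linarith
      · linarith
      · exact le_refl _
      · right; linarith
      · linarith
  · -- Case B : c + q ≤ b
    have haqb : a + q jn ≤ b := by linarith
    have h2qb : 2 * q jn ≤ b := by linarith
    have hw1qb : w1 + q jn ≤ b := by
      have hnotin : jn ∉ E := fun h => hjn (hEsub h)
      have hins : ∀ j ∈ insert jn E, j ∈ F ∪ {jn} := by
        intro j hj
        rcases Finset.mem_insert.1 hj with rfl | hj
        · exact hmemn
        · exact hmemF j (hEsub hj)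
      have hkey := sum_intervals (fun x => σ x 0) (jobTime F p q) (insert jn E)
        (fun j hj => by
          rcases Finset.mem_insert.1 hj with rfl | hj
          · rw [htn]; exact hq
          · rw [htF j (hEsub hj)]; exact hp j (hEsub hj))
        (fun j hj k hk hne => hσ2 0 j (hins j hj) k (hins k hk) hne)
        0 b hb0
        (fun j hj => hσ0 j (hins j hj) 0)
        (fun j hj => by
          rcases Finset.mem_insert.1 hj with rfl | hj
          · rw [htn]; exact haqb
          · rw [htF j (hEsub hj)]
            have h1 := (hσ4 j (hEsub hj)).1
            have h2 := hEmem j hj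
            have h3 := hp j (hEsub hj)
            linarith)
      rw [Finset.sum_insert hnotin, htn] at hkey
      have hcongr : ∑ j ∈ E, jobTime F p q j = ∑ j ∈ E, p j :=
        Finset.sum_congr rfl (fun j hj => htF j (hEsub hj))
      rw [hcongr] at hkey
      linarith
    rcases le_or_gt (b + 2 * q jn) C with hBC | hBC
    · -- Subcase B1 : C ≥ b + 2q
      apply construct F jn p q hjn hp hq pm hpm0 hpmq hpmF σ hσfull E hEsub hEmem hFmem
        0 (C - q jn) w1
      · linarith
      · linarith
      · left; linarith
      · right; linarith
      · linarith
      · left; linarith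
      · linarith
      · exact le_refl _
      · right; linarith
      · linarith
    · -- Subcase B2 : C < b + 2q
      have hym : w1 ≤ max w1 (q jn) := le_max_left _ _
      have hym2 : q jn ≤ max w1 (q jn) := le_max_right _ _
      have hymb : max w1 (q jn) + q jn ≤ b := by
        rcases max_cases w1 (q jn) with ⟨h, -⟩ | ⟨h, -⟩ <;> rw [h] <;> linarith
      have hympm : max w1 (q jn) + pm ≤ b := by
        rcases max_cases w1 (q jn) with ⟨h, -⟩ | ⟨h, -⟩ <;> rw [h] <;> linarith
      apply construct F jn p q hjn hp hq pm hpm0 hpmq hpmF σ hσfull E hEsub hEmem hFmem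
        0 (max w1 (q jn)) (max w1 (q jn) + q jn)
      · linarith
      · linarith
      · left; linarith
      · left; linarith
      · linarith
      · left; linarith
      · linarith
      · linarith
      · left; exact ⟨hym, le_refl _⟩
      · linarith
end
end

section
/- Suppose O = {J_n} consists of a single open-shop job with processing time q_n > p_max, and let {F1, F2} be a bipartition of F with both parts nonempty; let p_{i1} be the largest processing time in F1 and p_{i2} the largest in F2. Consider feasible schedules in which J_n is processed in machine order ⟨M3, M2, M1⟩ (C_n^3 ≤ S_n^2 and C_n^2 ≤ S_n^1), every job of F1 is completed on M2 by time S_n^2, and every job of F2 starts on M2 no earlier than C_n^2. Then every such schedule has makespan at least max{p_{i1} + P(F1), q_n} + q_n + max{p_{i2} + P(F2), q_n}, and there exists such a schedule with makespan exactly this value. -/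
open Finset

noncomputable section

private lemma pack_aux {J : Type*} [DecidableEq J] (f len : J → ℝ) :
    ∀ (s : Finset J) (a b : ℝ), a ≤ b → (∀ j ∈ s, 0 < len j) → (∀ j ∈ s, a ≤ f j) →
    (∀ j ∈ s, f j + len j ≤ b) →
    (∀ j ∈ s, ∀ k ∈ s, j ≠ k → f j + len j ≤ f k ∨ f k + len k ≤ f j) →
    ∑ j ∈ s, len j ≤ b - a := by
  intro s
  induction s using Finset.strongInduction with
  | _ s ih =>
    intro a b hab hpos ha hb hdisj
    rcases s.eq_empty_or_nonempty with rfl | hne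
    · simpa using sub_nonneg.2 hab
    · obtain ⟨j0, hj0, hmax⟩ := s.exists_max_image f hne
      have herase : ∀ k ∈ s.erase j0, f k + len k ≤ f j0 := by
        intro k hk
        have hks := Finset.mem_of_mem_erase hk
        have hne' := Finset.ne_of_mem_erase hk
        rcases hdisj k hks j0 hj0 hne' with h | h
        · exact h
        · exact absurd h (by nlinarith [hmax k hks, hpos j0 hj0])
      have hsub : s.erase j0 ⊂ s := Finset.erase_ssubset hj0
      have := ih (s.erase j0) hsub a (f j0) (ha j0 hj0)
        (fun k hk => hpos k (Finset.mem_of_mem_erase hk))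
        (fun k hk => ha k (Finset.mem_of_mem_erase hk)) herase
        (fun k hk l hl hkl =>
          hdisj k (Finset.mem_of_mem_erase hk) l (Finset.mem_of_mem_erase hl) hkl)
      have hsum : ∑ j ∈ s.erase j0, len j + len j0 = ∑ j ∈ s, len j :=
        Finset.sum_erase_add s len hj0
      have := hb j0 hj0
      linarith

private def psum {J : Type*} [DecidableEq J] [LinearOrder J] (p : J → ℝ)
    (s : Finset J) (j : J) : ℝ := ∑ k ∈ s.filter (fun k => k < j), p k

private lemma psum_nonneg {J : Type*} [DecidableEq J] [LinearOrder J] (p : J → ℝ)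
    {s : Finset J} (hp : ∀ j ∈ s, 0 ≤ p j) (j : J) : 0 ≤ psum p s j :=
  Finset.sum_nonneg fun k hk => hp k (Finset.mem_of_mem_filter k hk)

private lemma psum_add_le {J : Type*} [DecidableEq J] [LinearOrder J] (p : J → ℝ)
    {s : Finset J} (hp : ∀ j ∈ s, 0 ≤ p j) {j k : J} (hj : j ∈ s)
    (hjk : j < k) : psum p s j + p j ≤ psum p s k := by
  have hjn : j ∉ s.filter (fun l => l < j) := by simp
  have : psum p s j + p j = ∑ l ∈ insert j (s.filter (fun l => l < j)), p l := by
    rw [Finset.sum_insert hjn, psum]; ring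
  rw [this]
  apply Finset.sum_le_sum_of_subset_of_nonneg
  · intro x hx
    rcases Finset.mem_insert.1 hx with rfl | hx
    · exact Finset.mem_filter.2 ⟨hj, hjk⟩
    · rcases Finset.mem_filter.1 hx with ⟨hxs, hxl⟩
      exact Finset.mem_filter.2 ⟨hxs, hxl.trans hjk⟩
  · intro x hx _; exact hp x (Finset.mem_of_mem_filter x hx)

private lemma psum_add_le_total {J : Type*} [DecidableEq J] [LinearOrder J] (p : J → ℝ)
    {s : Finset J} (hp : ∀ j ∈ s, 0 ≤ p j) {j : J} (hj : j ∈ s) :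
    psum p s j + p j ≤ ∑ k ∈ s, p k := by
  have hjn : j ∉ s.filter (fun l => l < j) := by simp
  have : psum p s j + p j = ∑ l ∈ insert j (s.filter (fun l => l < j)), p l := by
    rw [Finset.sum_insert hjn, psum]; ring
  rw [this]
  apply Finset.sum_le_sum_of_subset_of_nonneg
  · intro x hx
    rcases Finset.mem_insert.1 hx with rfl | hx
    · exact hj
    · exact Finset.mem_of_mem_filter x hx
  · intro x hx _; exact hp x hx

private lemma psum_max' {J : Type*} [DecidableEq J] [LinearOrder J] (p : J → ℝ)
    {s : Finset J} (hs : s.Nonempty) :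
    psum p s (s.max' hs) + p (s.max' hs) = ∑ k ∈ s, p k := by
  have : s.filter (fun l => l < s.max' hs) = s.erase (s.max' hs) := by
    ext k
    simp only [Finset.mem_filter, Finset.mem_erase]
    constructor
    · rintro ⟨hk, hlt⟩; exact ⟨ne_of_lt hlt, hk⟩
    · rintro ⟨hne, hk⟩; exact ⟨hk, lt_of_le_of_ne (Finset.le_max' s k hk) hne⟩
  rw [psum, this, Finset.sum_erase_add s p (s.max'_mem hs)]

private lemma triple_disj {v : Fin 3 → ℝ} {t : ℝ}
    (h01 : v 0 + t ≤ v 1 ∨ v 1 + t ≤ v 0)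
    (h02 : v 0 + t ≤ v 2 ∨ v 2 + t ≤ v 0)
    (h12 : v 1 + t ≤ v 2 ∨ v 2 + t ≤ v 1) :
    ∀ i i' : Fin 3, i ≠ i' → v i + t ≤ v i' ∨ v i' + t ≤ v i := by
  intro i i' h
  fin_cases i <;> fin_cases i' <;> simp_all <;> tauto

/-- Lemma 6.4: suppose `O = {jn}` with `q_n > p_max` and `{F1, F2}` is a bipartition of
`F` with both parts nonempty, whose largest jobs are `i1` and `i2` respectively. Among
the feasible schedules in which `jn` is processed in machine order `⟨M3, M2, M1⟩`
(i.e. `C_n^3 ≤ S_n^2` and `C_n^2 ≤ S_n^1`), every job of `F1` is completed on `M2` by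
time `S_n^2`, and every job of `F2` starts on `M2` no earlier than `C_n^2`, every one
has makespan at least `max {p_{i1} + P(F1), q_n} + q_n + max {p_{i2} + P(F2), q_n}` and
one attains exactly this value. Machines `M1, M2, M3` are `0, 1, 2`. -/
theorem stmt17 {J : Type*} [DecidableEq J] (F : Finset J) (jn : J) (p q : J → ℝ)
    (hdisj : Disjoint F {jn})
    (hp : ∀ j ∈ F, 0 < p j) (hq : 0 < q jn)
    (hpq : ∀ j ∈ F, p j < q jn)
    (F1 F2 : Finset J) (hunion : F1 ∪ F2 = F) (hdisj12 : Disjoint F1 F2)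
    (hF1 : F1.Nonempty) (hF2 : F2.Nonempty)
    (i1 : J) (hi1 : i1 ∈ F1) (hi1max : ∀ j ∈ F1, p j ≤ p i1)
    (i2 : J) (hi2 : i2 ∈ F2) (hi2max : ∀ j ∈ F2, p j ≤ p i2) :
    (∀ S : J → Fin 3 → ℝ, Feasible F {jn} p q S →
        S jn 2 + q jn ≤ S jn 1 → S jn 1 + q jn ≤ S jn 0 →
        (∀ j ∈ F1, S j 1 + p j ≤ S jn 1) → (∀ j ∈ F2, S jn 1 + q jn ≤ S j 1) →
        max (p i1 + ∑ j ∈ F1, p j) (q jn) + q jn + max (p i2 + ∑ j ∈ F2, p j) (q jn)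
          ≤ makespan F {jn} p q S) ∧
    (∃ S : J → Fin 3 → ℝ, Feasible F {jn} p q S ∧
        S jn 2 + q jn ≤ S jn 1 ∧ S jn 1 + q jn ≤ S jn 0 ∧
        (∀ j ∈ F1, S j 1 + p j ≤ S jn 1) ∧ (∀ j ∈ F2, S jn 1 + q jn ≤ S j 1) ∧
        makespan F {jn} p q S =
          max (p i1 + ∑ j ∈ F1, p j) (q jn) + q jn
            + max (p i2 + ∑ j ∈ F2, p j) (q jn)) := by
  have hjnF : jn ∉ F := fun h => (Finset.disjoint_left.1 hdisj h) (Finset.mem_singleton_self jn)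
  have htF : ∀ j ∈ F, jobTime F p q j = p j := fun j hj => if_pos hj
  have htn : jobTime F p q jn = q jn := if_neg hjnF
  have hF1F : ∀ j ∈ F1, j ∈ F := fun j hj => hunion ▸ Finset.mem_union_left F2 hj
  have hF2F : ∀ j ∈ F2, j ∈ F := fun j hj => hunion ▸ Finset.mem_union_right F1 hj
  have hmemU : ∀ j ∈ F, j ∈ F ∪ {jn} := fun j hj => Finset.mem_union_left _ hj
  have hjnU : jn ∈ F ∪ {jn} := Finset.mem_union_right _ (Finset.mem_singleton_self jn)
  have hp1 : 0 < p i1 := hp i1 (hF1F i1 hi1)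
  have hp2 : 0 < p i2 := hp i2 (hF2F i2 hi2)
  constructor
  · intro S hfeas h32 h21 hbefore hafter
    obtain ⟨h0, hmach, hjob, hflow⟩ := hfeas
    have hmachp : ∀ i : Fin 3, ∀ j ∈ F, ∀ k ∈ F, j ≠ k →
        S j i + p j ≤ S k i ∨ S k i + p k ≤ S j i := by
      intro i j hj k hk hjk
      have := hmach i j (hmemU j hj) k (hmemU k hk) hjk
      rwa [htF j hj, htF k hk] at this
    set M := makespan F {jn} p q S with hMdef
    have hM : ∀ j ∈ F ∪ {jn}, ∀ i : Fin 3, S j i + jobTime F p q j ≤ M := by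
      intro j hj i
      apply le_csSup
      · apply Set.Finite.bddAbove
        have hsub : {x : ℝ | ∃ j ∈ F ∪ {jn}, ∃ i : Fin 3, x = S j i + jobTime F p q j} ⊆
            ↑(((F ∪ {jn}) ×ˢ (Finset.univ : Finset (Fin 3))).image
              (fun ji => S ji.1 ji.2 + jobTime F p q ji.1)) := by
          rintro x ⟨j', hj', i', rfl⟩
          simp only [Finset.coe_image, Set.mem_image, Finset.mem_coe, Finset.mem_product]
          exact ⟨(j', i'), by simp only [Finset.mem_product, Finset.mem_univ, and_true]; exact hj', rfl⟩
        exact Set.Finite.subset (Finset.finite_toSet _) hsub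
      · exact ⟨j, hj, i, rfl⟩
    have hMF : ∀ j ∈ F, ∀ i : Fin 3, S j i + p j ≤ M := by
      intro j hj i
      have := hM j (hmemU j hj) i
      rwa [htF j hj] at this
    have hMn : ∀ i : Fin 3, S jn i + q jn ≤ M := by
      intro i
      have := hM jn hjnU i
      rwa [htn] at this
    -- Claim A : max (p i1 + P1) (q jn) ≤ S jn 1
    have hA : max (p i1 + ∑ j ∈ F1, p j) (q jn) ≤ S jn 1 := by
      apply max_le
      · -- flow-shop bound on F1
        set E := (F1.erase i1).filter (fun j => S j 1 + p j ≤ S i1 1) with hE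
        set L := (F1.erase i1).filter (fun j => ¬ (S j 1 + p j ≤ S i1 1)) with hL
        have hEF1 : ∀ j ∈ E, j ∈ F1 := fun j hj =>
          Finset.mem_of_mem_erase (Finset.mem_of_mem_filter j hj)
        have hLF1 : ∀ j ∈ L, j ∈ F1 := fun j hj =>
          Finset.mem_of_mem_erase (Finset.mem_of_mem_filter j hj)
        have hi1nE : i1 ∉ E := fun h =>
          (Finset.ne_of_mem_erase (Finset.mem_of_mem_filter i1 h)) rfl
        have hi1nL : i1 ∉ L := fun h =>
          (Finset.ne_of_mem_erase (Finset.mem_of_mem_filter i1 h)) rfl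
        have hpos1 : ∀ j ∈ F1, 0 < p j := fun j hj => hp j (hF1F j hj)
        -- pack E ∪ {i1} on machine 0 in [0, S i1 1]
        have pk1 : ∑ j ∈ insert i1 E, p j ≤ S i1 1 - 0 := by
          apply pack_aux (fun j => S j 0) p (insert i1 E) 0 (S i1 1)
            (h0 i1 (hmemU i1 (hF1F i1 hi1)) 1)
          · intro j hj
            rcases Finset.mem_insert.1 hj with rfl | hj
            · exact hp1
            · exact hpos1 j (hEF1 j hj)
          · intro j hj
            rcases Finset.mem_insert.1 hj with rfl | hj
            · exact h0 j (hmemU j (hF1F j hi1)) 0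
            · exact h0 j (hmemU j (hF1F j (hEF1 j hj))) 0
          · intro j hj
            rcases Finset.mem_insert.1 hj with rfl | hj
            · exact (hflow j (hF1F j hi1)).1
            · have h1 := (hflow j (hF1F j (hEF1 j hj))).1
              have h2 := (Finset.mem_filter.1 hj).2
              have h3 := hpos1 j (hEF1 j hj)
              linarith
          · intro j hj k hk hjk
            apply hmachp 0 j _ k _ hjk
            · rcases Finset.mem_insert.1 hj with rfl | hj
              · exact hF1F j hi1
              · exact hF1F j (hEF1 j hj)
            · rcases Finset.mem_insert.1 hk with rfl | hk
              · exact hF1F k hi1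
              · exact hF1F k (hEF1 k hk)
        -- pack L ∪ {i1} on machine 1 in [S i1 1, S jn 1]
        have pk2 : ∑ j ∈ insert i1 L, p j ≤ S jn 1 - S i1 1 := by
          apply pack_aux (fun j => S j 1) p (insert i1 L) (S i1 1) (S jn 1)
            (by have := hbefore i1 hi1; linarith)
          · intro j hj
            rcases Finset.mem_insert.1 hj with rfl | hj
            · exact hp1
            · exact hpos1 j (hLF1 j hj)
          · intro j hj
            rcases Finset.mem_insert.1 hj with rfl | hj
            · exact le_refl _
            · have hnot := (Finset.mem_filter.1 hj).2
              have hjF := hF1F j (hLF1 j hj)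
              have hne : j ≠ i1 := Finset.ne_of_mem_erase (Finset.mem_of_mem_filter j hj)
              rcases hmachp 1 j hjF i1 (hF1F i1 hi1) hne with h | h
              · exact absurd h hnot
              · linarith
          · intro j hj
            rcases Finset.mem_insert.1 hj with rfl | hj
            · exact hbefore j hi1
            · exact hbefore j (hLF1 j hj)
          · intro j hj k hk hjk
            apply hmachp 1 j _ k _ hjk
            · rcases Finset.mem_insert.1 hj with rfl | hj
              · exact hF1F j hi1
              · exact hF1F j (hLF1 j hj)
            · rcases Finset.mem_insert.1 hk with rfl | hk
              · exact hF1F k hi1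
              · exact hF1F k (hLF1 k hk)
        rw [Finset.sum_insert hi1nE] at pk1
        rw [Finset.sum_insert hi1nL] at pk2
        have hsplitEL : ∑ j ∈ E, p j + ∑ j ∈ L, p j = ∑ j ∈ F1.erase i1, p j :=
          Finset.sum_filter_add_sum_filter_not _ _ _
        have hsum1 : ∑ j ∈ F1.erase i1, p j + p i1 = ∑ j ∈ F1, p j :=
          Finset.sum_erase_add F1 p hi1
        linarith
      · have := h0 jn hjnU 2
        linarith
    -- Claim B : S jn 1 + q jn + max (p i2 + P2) (q jn) ≤ M
    have hB1 : S jn 1 + q jn + (p i2 + ∑ j ∈ F2, p j) ≤ M := by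
      set E := (F2.erase i2).filter (fun j => S j 2 + p j ≤ S i2 2) with hE
      set L := (F2.erase i2).filter (fun j => ¬ (S j 2 + p j ≤ S i2 2)) with hL
      have hEF2 : ∀ j ∈ E, j ∈ F2 := fun j hj =>
        Finset.mem_of_mem_erase (Finset.mem_of_mem_filter j hj)
      have hLF2 : ∀ j ∈ L, j ∈ F2 := fun j hj =>
        Finset.mem_of_mem_erase (Finset.mem_of_mem_filter j hj)
      have hi2nE : i2 ∉ E := fun h =>
        (Finset.ne_of_mem_erase (Finset.mem_of_mem_filter i2 h)) rfl
      have hi2nL : i2 ∉ L := fun h =>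
        (Finset.ne_of_mem_erase (Finset.mem_of_mem_filter i2 h)) rfl
      have hpos2 : ∀ j ∈ F2, 0 < p j := fun j hj => hp j (hF2F j hj)
      -- pack E ∪ {i2} on machine 1 in [S jn 1 + q jn, S i2 2]
      have pk1 : ∑ j ∈ insert i2 E, p j ≤ S i2 2 - (S jn 1 + q jn) := by
        apply pack_aux (fun j => S j 1) p (insert i2 E) (S jn 1 + q jn) (S i2 2)
          (by have h1 := hafter i2 hi2; have h2 := (hflow i2 (hF2F i2 hi2)).2; linarith)
        · intro j hj
          rcases Finset.mem_insert.1 hj with rfl | hj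
          · exact hp2
          · exact hpos2 j (hEF2 j hj)
        · intro j hj
          rcases Finset.mem_insert.1 hj with rfl | hj
          · exact hafter j hi2
          · exact hafter j (hEF2 j hj)
        · intro j hj
          rcases Finset.mem_insert.1 hj with rfl | hj
          · exact (hflow j (hF2F j hi2)).2
          · have h1 := (hflow j (hF2F j (hEF2 j hj))).2
            have h2 := (Finset.mem_filter.1 hj).2
            have h3 := hpos2 j (hEF2 j hj)
            linarith
        · intro j hj k hk hjk
          apply hmachp 1 j _ k _ hjk
          · rcases Finset.mem_insert.1 hj with rfl | hj
            · exact hF2F j hi2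
            · exact hF2F j (hEF2 j hj)
          · rcases Finset.mem_insert.1 hk with rfl | hk
            · exact hF2F k hi2
            · exact hF2F k (hEF2 k hk)
      -- pack L ∪ {i2} on machine 2 in [S i2 2, M]
      have pk2 : ∑ j ∈ insert i2 L, p j ≤ M - S i2 2 := by
        apply pack_aux (fun j => S j 2) p (insert i2 L) (S i2 2) M
          (by have := hMF i2 (hF2F i2 hi2) 2; linarith)
        · intro j hj
          rcases Finset.mem_insert.1 hj with rfl | hj
          · exact hp2
          · exact hpos2 j (hLF2 j hj)
        · intro j hj
          rcases Finset.mem_insert.1 hj with rfl | hj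
          · exact le_refl _
          · have hnot := (Finset.mem_filter.1 hj).2
            have hjF := hF2F j (hLF2 j hj)
            have hne : j ≠ i2 := Finset.ne_of_mem_erase (Finset.mem_of_mem_filter j hj)
            rcases hmachp 2 j hjF i2 (hF2F i2 hi2) hne with h | h
            · exact absurd h hnot
            · linarith
        · intro j hj
          rcases Finset.mem_insert.1 hj with rfl | hj
          · exact hMF j (hF2F j hi2) 2
          · exact hMF j (hF2F j (hLF2 j hj)) 2
        · intro j hj k hk hjk
          apply hmachp 2 j _ k _ hjk
          · rcases Finset.mem_insert.1 hj with rfl | hj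
            · exact hF2F j hi2
            · exact hF2F j (hLF2 j hj)
          · rcases Finset.mem_insert.1 hk with rfl | hk
            · exact hF2F k hi2
            · exact hF2F k (hLF2 k hk)
      rw [Finset.sum_insert hi2nE] at pk1
      rw [Finset.sum_insert hi2nL] at pk2
      have hsplitEL : ∑ j ∈ E, p j + ∑ j ∈ L, p j = ∑ j ∈ F2.erase i2, p j :=
        Finset.sum_filter_add_sum_filter_not _ _ _
      have hsum2 : ∑ j ∈ F2.erase i2, p j + p i2 = ∑ j ∈ F2, p j :=
        Finset.sum_erase_add F2 p hi2
      linarith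
    have hB2 : S jn 1 + q jn + q jn ≤ M := by
      have := hMn 0
      linarith
    have hmaxB : max (p i2 + ∑ j ∈ F2, p j) (q jn) ≤ M - S jn 1 - q jn :=
      max_le (by linarith) (by linarith)
    linarith
  · letI : LinearOrder J := @IsWellOrder.linearOrder J WellOrderingRel WellOrderingRel.isWellOrder
    have hp0F1 : ∀ j ∈ F1, 0 ≤ p j := fun j hj => (hp j (hF1F j hj)).le
    have hp0F2 : ∀ j ∈ F2, 0 ≤ p j := fun j hj => (hp j (hF2F j hj)).le
    have hsplit : ∀ j ∈ F ∪ ({jn} : Finset J), j = jn ∨ j ∈ F1 ∨ j ∈ F2 := by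
      intro j hj
      rcases Finset.mem_union.1 hj with h | h
      · right
        rw [← hunion] at h
        exact Finset.mem_union.1 h
      · exact Or.inl (Finset.mem_singleton.1 h)
    set P1 := ∑ j ∈ F1, p j with hP1def
    set P2 := ∑ j ∈ F2, p j with hP2def
    set A := max (p i1 + P1) (q jn) with hAdef
    set B := max (p i2 + P2) (q jn) with hBdef
    set Z := max (A + q jn) (P1 + P2) with hZdef
    have hA1 : p i1 + P1 ≤ A := le_max_left _ _
    have hAq : q jn ≤ A := le_max_right _ _
    have hB1 : p i2 + P2 ≤ B := le_max_left _ _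
    have hBq : q jn ≤ B := le_max_right _ _
    have hP1nn : 0 ≤ P1 := Finset.sum_nonneg hp0F1
    have hP2nn : 0 ≤ P2 := Finset.sum_nonneg hp0F2
    have hZ1 : A + q jn ≤ Z := le_max_left _ _
    have hZ2 : P1 + P2 ≤ Z := le_max_right _ _
    have hZub : Z ≤ A + B := max_le (by linarith) (by linarith)
    have hpsi1 : ∀ j ∈ F1, 0 ≤ psum p F1 j := fun j _ => psum_nonneg p hp0F1 j
    have hpsi1t : ∀ j ∈ F1, psum p F1 j + p j ≤ P1 := fun j hj => psum_add_le_total p hp0F1 hj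
    have hpsi2 : ∀ j ∈ F2, 0 ≤ psum p F2 j := fun j _ => psum_nonneg p hp0F2 j
    have hpsi2t : ∀ j ∈ F2, psum p F2 j + p j ≤ P2 := fun j hj => psum_add_le_total p hp0F2 hj
    have hne1 : ∀ j ∈ F1, j ≠ jn := fun j hj h => hjnF (h ▸ hF1F j hj)
    have hne2 : ∀ j ∈ F2, j ≠ jn := fun j hj h => hjnF (h ▸ hF2F j hj)
    have hnF1 : ∀ j ∈ F2, j ∉ F1 := fun j hj => Finset.disjoint_right.1 hdisj12 hj
    set S : J → Fin 3 → ℝ := fun j i =>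
      if j = jn then ![Z, A, 0] i
      else if j ∈ F1 then ![psum p F1 j, p i1 + psum p F1 j, q jn + p i1 + psum p F1 j] i
      else ![P1 + psum p F2 j, A + q jn + psum p F2 j, A + q jn + p i2 + psum p F2 j] i
      with hSdef
    have hvn : S jn = ![Z, A, 0] := by funext i; simp [hSdef]
    have hv1 : ∀ j ∈ F1,
        S j = ![psum p F1 j, p i1 + psum p F1 j, q jn + p i1 + psum p F1 j] := by
      intro j hj; funext i; simp [hSdef, hne1 j hj, hj]
    have hv2 : ∀ j ∈ F2,
        S j = ![P1 + psum p F2 j, A + q jn + psum p F2 j, A + q jn + p i2 + psum p F2 j] := by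
      intro j hj; funext i; simp [hSdef, hne2 j hj, hnF1 j hj]
    refine ⟨S, ⟨?_, ?_, ?_, ?_⟩, ?_, ?_, ?_, ?_, ?_⟩
    · -- nonnegativity
      intro j hj i
      rcases hsplit j hj with rfl | hj1 | hj2
      · rw [hvn]; fin_cases i <;> simp <;> linarith
      · have h1 := hpsi1 j hj1
        rw [hv1 j hj1]; fin_cases i <;> simp <;> linarith
      · have h1 := hpsi2 j hj2
        rw [hv2 j hj2]; fin_cases i <;> simp <;> linarith
    · -- machine disjointness
      intro i j hj k hk hjk
      rcases hsplit j hj with rfl | hj1 | hj2 <;> rcases hsplit k hk with rfl | hk1 | hk2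
      · exact absurd rfl hjk
      · -- jn vs F1
        rw [htn, htF k (hF1F k hk1), hvn, hv1 k hk1]
        have h1 := hpsi1 k hk1
        have h2 := hpsi1t k hk1
        have h3 := hi1max k hk1
        fin_cases i
        · right; simp; linarith
        · right; simp; linarith
        · left; simp; linarith
      · -- jn vs F2
        rw [htn, htF k (hF2F k hk2), hvn, hv2 k hk2]
        have h1 := hpsi2 k hk2
        have h2 := hpsi2t k hk2
        fin_cases i
        · right; simp; linarith
        · left; simp; linarith
        · left; simp; linarith
      · -- F1 vs jn
        rw [htn, htF j (hF1F j hj1), hvn, hv1 j hj1]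
        have h1 := hpsi1 j hj1
        have h2 := hpsi1t j hj1
        have h3 := hi1max j hj1
        fin_cases i
        · left; simp; linarith
        · left; simp; linarith
        · right; simp; linarith
      · -- F1 vs F1
        rw [htF j (hF1F j hj1), htF k (hF1F k hk1), hv1 j hj1, hv1 k hk1]
        rcases lt_trichotomy j k with h | h | h
        · have hps := psum_add_le p hp0F1 hj1 h
          fin_cases i <;> (left; simp; linarith)
        · exact absurd h hjk
        · have hps := psum_add_le p hp0F1 hk1 h
          fin_cases i <;> (right; simp; linarith)
      · -- F1 vs F2
        rw [htF j (hF1F j hj1), htF k (hF2F k hk2), hv1 j hj1, hv2 k hk2]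
        have h1 := hpsi1t j hj1
        have h2 := hpsi2 k hk2
        have h3 := hpq j (hF1F j hj1)
        fin_cases i <;> (left; simp; linarith)
      · -- F2 vs jn
        rw [htn, htF j (hF2F j hj2), hvn, hv2 j hj2]
        have h1 := hpsi2 j hj2
        have h2 := hpsi2t j hj2
        fin_cases i
        · left; simp; linarith
        · right; simp; linarith
        · right; simp; linarith
      · -- F2 vs F1
        rw [htF j (hF2F j hj2), htF k (hF1F k hk1), hv2 j hj2, hv1 k hk1]
        have h1 := hpsi1t k hk1
        have h2 := hpsi2 j hj2
        have h3 := hpq k (hF1F k hk1)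
        fin_cases i <;> (right; simp; linarith)
      · -- F2 vs F2
        rw [htF j (hF2F j hj2), htF k (hF2F k hk2), hv2 j hj2, hv2 k hk2]
        rcases lt_trichotomy j k with h | h | h
        · have hps := psum_add_le p hp0F2 hj2 h
          fin_cases i <;> (left; simp; linarith)
        · exact absurd h hjk
        · have hps := psum_add_le p hp0F2 hk2 h
          fin_cases i <;> (right; simp; linarith)
    · -- per-job machine disjointness
      intro j hj i i' hii'
      rcases hsplit j hj with rfl | hj1 | hj2
      · rw [htn, hvn]
        exact triple_disj (Or.inr (by simp; linarith)) (Or.inr (by simp; linarith))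
          (Or.inr (by simp; linarith)) i i' hii'
      · rw [htF j (hF1F j hj1), hv1 j hj1]
        have h1 := hi1max j hj1
        have h2 := hpq j (hF1F j hj1)
        exact triple_disj (Or.inl (by simp; linarith)) (Or.inl (by simp; linarith))
          (Or.inl (by simp; linarith)) i i' hii'
      · rw [htF j (hF2F j hj2), hv2 j hj2]
        have h1 := hi2max j hj2
        have h2 := hpq j (hF2F j hj2)
        exact triple_disj (Or.inl (by simp; linarith)) (Or.inl (by simp; linarith))
          (Or.inl (by simp; linarith)) i i' hii'
    · -- flow constraints
      intro j hj
      have hj' : j ∈ F1 ∪ F2 := by rw [hunion]; exact hj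
      rcases Finset.mem_union.1 hj' with hj1 | hj2
      · have h1 := hi1max j hj1
        have h2 := hpq j hj
        rw [hv1 j hj1]
        constructor <;> simp <;> linarith
      · have h1 := hi2max j hj2
        have h2 := hpq j hj
        rw [hv2 j hj2]
        constructor <;> simp <;> linarith
    · rw [hvn]; simp; linarith
    · rw [hvn]; simp; linarith
    · intro j hj
      have h2 := hpsi1t j hj
      rw [hv1 j hj, hvn]; simp; linarith
    · intro j hj
      have h2 := hpsi2 j hj
      rw [hvn, hv2 j hj]; simp; linarith
    · -- makespan value
      rw [makespan]
      apply le_antisymm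
      · refine csSup_le ⟨S jn 2 + jobTime F p q jn, jn, hjnU, 2, rfl⟩ ?_
        rintro x ⟨j, hj, i, rfl⟩
        rcases hsplit j hj with rfl | hj1 | hj2
        · rw [htn, hvn]; fin_cases i <;> simp <;> linarith
        · have h2 := hpsi1t j hj1
          rw [htF j (hF1F j hj1), hv1 j hj1]
          fin_cases i <;> simp <;> linarith
        · have h2 := hpsi2t j hj2
          rw [htF j (hF2F j hj2), hv2 j hj2]
          fin_cases i <;> simp <;> linarith
      · apply le_csSup
        · apply Set.Finite.bddAbove
          have hsub : {x : ℝ | ∃ j ∈ F ∪ {jn}, ∃ i : Fin 3, x = S j i + jobTime F p q j} ⊆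
              ↑(((F ∪ {jn}) ×ˢ (Finset.univ : Finset (Fin 3))).image
                (fun ji => S ji.1 ji.2 + jobTime F p q ji.1)) := by
            rintro x ⟨j', hj', i', rfl⟩
            simp only [Finset.coe_image, Set.mem_image, Finset.mem_coe, Finset.mem_product]
            exact ⟨(j', i'), by simp only [Finset.mem_product, Finset.mem_univ, and_true]; exact hj', rfl⟩
          exact Set.Finite.subset (Finset.finite_toSet _) hsub
        · rcases le_or_gt (q jn) (p i2 + P2) with h | h
          · have hBe : B = p i2 + P2 := max_eq_left h
            have hmm := F2.max'_mem hF2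
            refine ⟨F2.max' hF2, hmemU _ (hF2F _ hmm), 2, ?_⟩
            rw [htF _ (hF2F _ hmm), hv2 _ hmm]
            have hps := psum_max' p hF2
            simp only [Matrix.cons_val_two, Matrix.tail_cons, Matrix.head_cons]
            rw [hBe]
            linarith
          · have hBe : B = q jn := max_eq_right h.le
            refine ⟨jn, hjnU, 0, ?_⟩
            rw [htn, hvn]
            have hZe : Z = A + q jn := by
              apply max_eq_left
              linarith [hp2, hA1, hp1]
            simp only [Matrix.cons_val_zero]
            rw [hZe, hBe]
end
end
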